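/- arXiv:2507.07777 — 11 statements merged into one kernel-verified Lean document; each statement's English description precedes it below -/
import Mathlib

section
/- Let a, x ∈ 𝒜. The following are equivalent: (1) x is the w-weighted core inverse of a; (2) xwawx = x, (wawx)* = wawx, x𝒜 = (aw)𝒜 and x*𝒜 = (waw)𝒜; (3) xwawx = x, (wawx)* = wawx, °(x) = °(aw) and °(x*) = °(waw); (4) xwawx = x, (wawx)* = wawx, °(x) = °(aw) and °(x*) ⊆ °(waw). -/
open Filter

/-- `y` is quasinilpotent: `‖yⁿ‖^{1/n} → 0`. -/
def IsQuasinilpotent {R : Type*} [NormedRing R] (y : R) : Prop :=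
  Filter.Tendsto (fun n : ℕ => ‖y ^ n‖ ^ (1 / (n : ℝ))) Filter.atTop (nhds 0)

/-- `y` is `w`-quasinilpotent: `‖(yw)ⁿ‖^{1/n} → 0`. -/
def IsWQuasinilpotent {R : Type*} [NormedRing R] (w y : R) : Prop :=
  Filter.Tendsto (fun n : ℕ => ‖(y * w) ^ n‖ ^ (1 / (n : ℝ))) Filter.atTop (nhds 0)

/-- `x` is a `w`-weighted core inverse of `a`. -/
def IsWCoreInv {R : Type*} [NormedRing R] [StarRing R] (w a x : R) : Prop :=
  a * (w * x) ^ 2 = x ∧ star (w * a * w * x) = w * a * w * x ∧ x * w * (a * w) ^ 2 = a * w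

/-- `x` is a generalized `w`-weighted core-EP inverse of `a`. -/
def IsWCoreEPInv {R : Type*} [NormedRing R] [StarRing R] (w a x : R) : Prop :=
  a * (w * x) ^ 2 = x ∧ star (w * a * w * x) = w * a * w * x ∧
    Filter.Tendsto (fun n : ℕ => ‖(a * w) ^ n - x * w * (a * w) ^ (n + 1)‖ ^ (1 / (n : ℝ)))
      Filter.atTop (nhds 0)

/-- `g` is a group inverse of `b`. -/
def IsGroupInv {R : Type*} [Ring R] (b g : R) : Prop :=
  b * g * b = b ∧ g * b * g = g ∧ b * g = g * b

/-- `u` is a (1,3)-inverse of `b`. -/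
def Is13Inv {R : Type*} [Ring R] [StarRing R] (b u : R) : Prop :=
  b * u * b = b ∧ star (b * u) = b * u

/-- `x` is a `(b,c)`-inverse of `a`. -/
def IsBCInv {R : Type*} [Ring R] (b c a x : R) : Prop :=
  x * a * b = b ∧ c * a * x = c ∧ (∃ s, x = b * s * x) ∧ (∃ t, x = x * t * c)

/-- `x` is a g-Drazin inverse of `b`. -/
def IsGDrazinInv {R : Type*} [NormedRing R] (b x : R) : Prop :=
  b * x = x * b ∧ x * b * x = x ∧ IsQuasinilpotent (b - b ^ 2 * x)

/-- `x` is a `w`-weighted g-Drazin inverse of `a`. -/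
def IsWGDrazinInv {R : Type*} [NormedRing R] (w a x : R) : Prop :=
  a * w * x = x * w * a ∧ x * w * a * w * x = x ∧
    IsWQuasinilpotent w (a - a * w * x * w * a)

/-- `x` is a core inverse of `a`. -/
def IsCoreInv {R : Type*} [Ring R] [StarRing R] (a x : R) : Prop :=
  a * x ^ 2 = x ∧ star (a * x) = a * x ∧ x * a ^ 2 = a

/-- `x` is a generalized core-EP inverse of `a`. -/
def IsCoreEPInv {R : Type*} [NormedRing R] [StarRing R] (a x : R) : Prop :=
  a * x ^ 2 = x ∧ star (a * x) = a * x ∧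
    Filter.Tendsto (fun n : ℕ => ‖a ^ n - x * a ^ (n + 1)‖ ^ (1 / (n : ℝ)))
      Filter.atTop (nhds 0)

/-- `x` is a pseudo core (core-EP) inverse of `a`. -/
def IsPseudoCoreInv {R : Type*} [Ring R] [StarRing R] (a x : R) : Prop :=
  a * x ^ 2 = x ∧ star (a * x) = a * x ∧ ∃ k : ℕ, 0 < k ∧ x * a ^ (k + 1) = a ^ k

/-- `u` is a `(1,3,w)`-inverse of `b`. -/
def Is13wInv {R : Type*} [Ring R] [StarRing R] (w b u : R) : Prop :=
  b = b * w * u * w * b ∧ star (w * b * w * u) = w * b * w * u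

variable {A : Type*} [NormedRing A] [NormedAlgebra ℂ A] [StarRing A] [StarModule ℂ A]
  [CompleteSpace A]

/-- Theorem 2.1. -/
theorem wCoreInv_tfae (w a x : A) :
    List.TFAE
      [ IsWCoreInv w a x,
        x * w * a * w * x = x ∧ star (w * a * w * x) = w * a * w * x ∧
          {y : A | ∃ r, y = x * r} = {y : A | ∃ r, y = a * w * r} ∧
          {y : A | ∃ r, y = star x * r} = {y : A | ∃ r, y = w * a * w * r},
        x * w * a * w * x = x ∧ star (w * a * w * x) = w * a * w * x ∧
          {z : A | z * x = 0} = {z : A | z * (a * w) = 0} ∧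
          {z : A | z * star x = 0} = {z : A | z * (w * a * w) = 0},
        x * w * a * w * x = x ∧ star (w * a * w * x) = w * a * w * x ∧
          {z : A | z * x = 0} = {z : A | z * (a * w) = 0} ∧
          {z : A | z * star x = 0} ⊆ {z : A | z * (w * a * w) = 0} ] := by
  tfae_have 1 → 2 := by
    rintro ⟨h1, h2, h3⟩
    have h1' : a * w * x * w * x = x := by
      linear_combination (norm := noncomm_ring) h1
    have hxx : x * w * a * w * x = x := by
      linear_combination (norm := noncomm_ring)
        h1' + h3 * (x * w * x) - (x * w * a * w) * h1'
    have hACD : a * w * x * w * a * w = a * w := by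
      linear_combination (norm := noncomm_ring)
        h3 + h1' * (w * a * w * a * w) - (a * w * x * w) * h3
    have h2' : star x * star (w * a * w) = w * a * w * x := by
      conv_rhs => rw [← h2, star_mul]
    have h5 : star x = w * a * w * x * star x := by
      have hx2 : x = x * (w * a * w * x) := by
        linear_combination (norm := noncomm_ring) -hxx
      calc star x = star (x * (w * a * w * x)) := by rw [← hx2]
        _ = star (w * a * w * x) * star x := by rw [star_mul]
        _ = w * a * w * x * star x := by rw [h2]
    have h6 : w * a * w = star x * star (w * a * w) * (w * a * w) := by
      rw [h2']
      linear_combination (norm := noncomm_ring) -(w * hACD)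
    refine ⟨hxx, h2, ?_, ?_⟩
    · ext y
      constructor
      · rintro ⟨r, rfl⟩
        exact ⟨x * w * x * r, by linear_combination (norm := noncomm_ring) -h1' * r⟩
      · rintro ⟨r, rfl⟩
        exact ⟨w * a * w * a * w * r, by linear_combination (norm := noncomm_ring) -h3 * r⟩
    · ext y
      constructor
      · rintro ⟨r, rfl⟩
        exact ⟨x * star x * r, by linear_combination (norm := noncomm_ring) h5 * r⟩
      · rintro ⟨r, rfl⟩
        exact ⟨star (w * a * w) * (w * a * w) * r,
          by linear_combination (norm := noncomm_ring) h6 * r⟩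
  tfae_have 2 → 3 := by
    rintro ⟨h1, h2, h3, h4⟩
    obtain ⟨s, hs⟩ : ∃ r, x = a * w * r := by
      have hm : x ∈ {y : A | ∃ r, y = x * r} := ⟨1, (mul_one x).symm⟩
      rwa [h3] at hm
    obtain ⟨t, ht⟩ : ∃ r, a * w = x * r := by
      have hm : a * w ∈ {y : A | ∃ r, y = a * w * r} := ⟨1, (mul_one _).symm⟩
      rwa [← h3] at hm
    obtain ⟨s', hs'⟩ : ∃ r, star x = w * a * w * r := by
      have hm : star x ∈ {y : A | ∃ r, y = star x * r} := ⟨1, (mul_one _).symm⟩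
      rwa [h4] at hm
    obtain ⟨t', ht'⟩ : ∃ r, w * a * w = star x * r := by
      have hm : w * a * w ∈ {y : A | ∃ r, y = w * a * w * r} := ⟨1, (mul_one _).symm⟩
      rwa [← h4] at hm
    refine ⟨h1, h2, ?_, ?_⟩
    · ext z
      simp only [Set.mem_setOf_eq]
      constructor
      · intro hz
        rw [ht, ← mul_assoc, hz, zero_mul]
      · intro hz
        rw [hs, ← mul_assoc, hz, zero_mul]
    · ext z
      simp only [Set.mem_setOf_eq]
      constructor
      · intro hz
        rw [ht', ← mul_assoc, hz, zero_mul]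
      · intro hz
        rw [hs', ← mul_assoc, hz, zero_mul]
  tfae_have 3 → 4 := by
    rintro ⟨h1, h2, h3, h4⟩
    exact ⟨h1, h2, h3, h4.subset⟩
  tfae_have 4 → 1 := by
    rintro ⟨k1, k2, k3, k4⟩
    -- Step A : x w (a w)^2 = a w
    have mA : (1 - x * w * a * w) ∈ {z : A | z * x = 0} := by
      show (1 - x * w * a * w) * x = 0
      linear_combination (norm := noncomm_ring) -k1
    rw [k3] at mA
    have hA : x * w * a * w * a * w = a * w := by
      have h := mA
      simp only [Set.mem_setOf_eq] at h
      linear_combination (norm := noncomm_ring) -h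
    -- Step B : w a w x w a w = w a w
    have mB : (1 - w * a * w * x) ∈ {z : A | z * star x = 0} := by
      show (1 - w * a * w * x) * star x = 0
      have hx2 : star x = w * a * w * x * star x := by
        calc star x = star (x * (w * a * w * x)) := by
              rw [show x * (w * a * w * x) = x from by
                linear_combination (norm := noncomm_ring) k1]
          _ = star (w * a * w * x) * star x := by rw [star_mul]
          _ = w * a * w * x * star x := by rw [k2]
      linear_combination (norm := noncomm_ring) hx2
    have hB : w * a * w * x * w * a * w = w * a * w := by
      have h := k4 mB
      simp only [Set.mem_setOf_eq] at h
      linear_combination (norm := noncomm_ring) -h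
    -- Step C : a w x w a w = a w
    have hwd : w * (a * w - a * w * x * w * a * w) = 0 := by
      linear_combination (norm := noncomm_ring) -hB
    have hfd : a * w - a * w * x * w * a * w
        = x * (w * a * (w * (a * w - a * w * x * w * a * w))) := by
      linear_combination (norm := noncomm_ring) -hA + hA * (x * w * a * w)
    have hC : a * w * x * w * a * w = a * w := by
      have h0 : a * w - a * w * x * w * a * w = 0 := by
        rw [hfd, hwd, mul_zero, mul_zero]
      linear_combination (norm := noncomm_ring) -h0
    -- Step D : a (w x)^2 = x
    have mD : (1 - a * w * x * w) ∈ {z : A | z * (a * w) = 0} := by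
      show (1 - a * w * x * w) * (a * w) = 0
      linear_combination (norm := noncomm_ring) -hC
    rw [← k3] at mD
    have hD : a * (w * x) ^ 2 = x := by
      have h := mD
      simp only [Set.mem_setOf_eq] at h
      linear_combination (norm := noncomm_ring) -h
    exact ⟨hD, k2, by linear_combination (norm := noncomm_ring) hA⟩
  tfae_finish
end

section
/- Let a, x ∈ 𝒜. Then x is the w-weighted core inverse of a if and only if a(wx)² = x, xw(aw)² = aw, ((waw)x)* = (waw)x, (waw)x(waw) = waw, and x(waw)x = x. -/
open Filter

variable {A : Type*} [NormedRing A] [NormedAlgebra ℂ A] [StarRing A] [StarModule ℂ A]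
  [CompleteSpace A]

/-- Corollary 2.3. -/
theorem isWCoreInv_iff (w a x : A) :
    IsWCoreInv w a x ↔
      a * (w * x) ^ 2 = x ∧ x * w * (a * w) ^ 2 = a * w ∧
        star (w * a * w * x) = w * a * w * x ∧
        w * a * w * x * (w * a * w) = w * a * w ∧
        x * (w * a * w) * x = x := by
  constructor
  · rintro ⟨h1, h2, h3⟩
    have h1' : a * w * x * w * x = x := by simpa [pow_two, mul_assoc] using h1
    have h3' : x * w * a * w * a * w = a * w := by simpa [pow_two, mul_assoc] using h3
    refine ⟨h1, h3, h2, ?_, ?_⟩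
    · calc w * a * w * x * (w * a * w)
          = w * a * w * x * (w * (x * w * a * w * a * w)) := by rw [h3']; noncomm_ring
        _ = w * (a * w * x * w * x) * w * a * w * a * w := by noncomm_ring
        _ = w * (x * w * a * w * a * w) := by rw [h1']; noncomm_ring
        _ = w * a * w := by rw [h3']; noncomm_ring
    · calc x * (w * a * w) * x
          = x * (w * a * w) * (a * w * x * w * x) := by rw [h1']
        _ = (x * w * a * w * a * w) * (x * w * x) := by noncomm_ring
        _ = a * w * (x * w * x) := by rw [h3']
        _ = x := by simpa [mul_assoc] using h1'

  · rintro ⟨h1, h2, h3, _, _⟩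
    exact ⟨h1, h3, h2⟩
end

section
/- Let a ∈ 𝒜. Then a has a w-weighted core inverse if and only if aw has a group inverse and waw has a (1,3)-inverse. Moreover, if g is the group inverse of aw and u is a (1,3)-inverse of waw, then g·(aw)·u is the w-weighted core inverse of a. -/
open Filter

variable {A : Type*} [NormedRing A] [NormedAlgebra ℂ A] [StarRing A] [StarModule ℂ A]
  [CompleteSpace A]

/-- Theorem 2.4. -/
theorem isWCoreInv_exists_iff (w a : A) :
    ((∃ x, IsWCoreInv w a x) ↔
      (∃ g, IsGroupInv (a * w) g) ∧ (∃ u, Is13Inv (w * a * w) u)) ∧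
    (∀ g u, IsGroupInv (a * w) g → Is13Inv (w * a * w) u →
      IsWCoreInv w a (g * (a * w) * u)) := by
  have main : ∀ g u : A, IsGroupInv (a * w) g → Is13Inv (w * a * w) u →
      IsWCoreInv w a (g * (a * w) * u) := by
    intro g u hg hu
    obtain ⟨hg1, hg2, hg3⟩ := hg
    obtain ⟨hu1, hu2⟩ := hu
    -- hg1 : a*w*g*(a*w) = a*w,  hg2 : g*(a*w)*g = g,  hg3 : a*w*g = g*(a*w)
    -- hu1 : w*a*w*u*(w*a*w) = w*a*w,  hu2 : star (w*a*w*u) = w*a*w*u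
    have hgee : g * (a * w) * (a * w) = a * w := by
      rw [← hg3]; exact hg1
    have hegg : a * w * g * g = g := by
      rw [hg3]; exact hg2
    have D2 : a * w * u * (w * (a * w)) = a * w := by
      calc a * w * u * (w * (a * w))
          = g * (a * w) * (a * w) * u * (w * (a * w)) := by rw [hgee]
        _ = g * (a * (w * a * w * u * (w * a * w))) := by noncomm_ring
        _ = g * (a * (w * a * w)) := by rw [hu1]
        _ = g * (a * w) * (a * w) := by noncomm_ring
        _ = a * w := hgee
    refine ⟨?_, ?_, ?_⟩
    · calc a * (w * (g * (a * w) * u)) ^ 2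
          = a * w * g * (a * w * u) * (w * (g * (a * w * u))) := by noncomm_ring
        _ = a * w * g * (a * w * u) * (w * (a * w * g * g * (a * w * u))) := by
            rw [hegg]
        _ = a * w * g * (a * w * u * (w * (a * w))) * (g * (g * (a * w * u))) := by
            noncomm_ring
        _ = a * w * g * (a * w) * (g * (g * (a * w * u))) := by rw [D2]
        _ = a * w * (g * (g * (a * w * u))) := by rw [hg1]
        _ = a * w * g * g * (a * w * u) := by noncomm_ring
        _ = g * (a * w * u) := by rw [hegg]
        _ = g * (a * w) * u := by noncomm_ring
    · have h2' : w * a * w * (g * (a * w) * u) = w * a * w * u := by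
        calc w * a * w * (g * (a * w) * u)
            = w * (a * w * g * (a * w) * u) := by noncomm_ring
          _ = w * (a * w * u) := by rw [hg1]
          _ = w * a * w * u := by noncomm_ring
      rw [h2']; exact hu2
    · calc g * (a * w) * u * w * (a * w) ^ 2
          = g * (a * w * u * (w * (a * w))) * (a * w) := by noncomm_ring
        _ = g * (a * w) * (a * w) := by rw [D2]
        _ = a * w := hgee
  refine ⟨⟨?_, ?_⟩, main⟩
  · rintro ⟨x, h1, h2, h3⟩
    -- h1 : a*(w*x)^2 = x,  h2 : star (w*a*w*x) = w*a*w*x,  h3 : x*w*(a*w)^2 = a*w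
    have h1f : a * w * x * w * x = x := by
      calc a * w * x * w * x = a * (w * x) ^ 2 := by noncomm_ring
        _ = x := h1
    have h3f : x * w * (a * w) * (a * w) = a * w := by
      calc x * w * (a * w) * (a * w) = x * w * (a * w) ^ 2 := by noncomm_ring
        _ = a * w := h3
    have Z1 : a * w * x * w * x * w = x * w := by rw [h1f]
    have Z3 : a * w * (x * w) * (a * w) = a * w := by
      calc a * w * (x * w) * (a * w)
          = a * w * (x * w) * (x * w * (a * w) * (a * w)) := by rw [h3f]
        _ = a * w * x * w * x * w * (a * w) * (a * w) := by noncomm_ring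
        _ = x * w * (a * w) * (a * w) := by rw [Z1]
        _ = a * w := h3f
    have Z2 : x * w * (a * w) * (x * w) = x * w := by
      calc x * w * (a * w) * (x * w)
          = x * w * (a * w) * (a * w * x * w * x * w) := by rw [Z1]
        _ = x * w * (a * w) * (a * w) * (x * w * x * w) := by noncomm_ring
        _ = a * w * (x * w * x * w) := by rw [h3f]
        _ = a * w * x * w * x * w := by noncomm_ring
        _ = x * w := Z1
    constructor
    · refine ⟨x * w * (x * w) * (a * w), ?_, ?_, ?_⟩
      · calc a * w * (x * w * (x * w) * (a * w)) * (a * w)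
            = a * w * x * w * x * w * (a * w) * (a * w) := by noncomm_ring
          _ = x * w * (a * w) * (a * w) := by rw [Z1]
          _ = a * w := h3f
      · calc x * w * (x * w) * (a * w) * (a * w) * (x * w * (x * w) * (a * w))
            = x * w * (x * w * (a * w) * (a * w)) * (x * w * (x * w) * (a * w)) := by
              noncomm_ring
          _ = x * w * (a * w) * (x * w * (x * w) * (a * w)) := by rw [h3f]
          _ = x * w * (a * w) * (x * w) * (x * w * (a * w)) := by noncomm_ring
          _ = x * w * (x * w * (a * w)) := by rw [Z2]
          _ = x * w * (x * w) * (a * w) := by noncomm_ring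
      · calc a * w * (x * w * (x * w) * (a * w))
            = a * w * x * w * x * w * (a * w) := by noncomm_ring
          _ = x * w * (a * w) := by rw [Z1]
          _ = x * (w * (a * w)) := by noncomm_ring
          _ = x * (w * (x * w * (a * w) * (a * w))) := by rw [h3f]
          _ = x * w * (x * w) * (a * w) * (a * w) := by noncomm_ring
    · refine ⟨x, ?_, h2⟩
      calc w * a * w * x * (w * a * w)
          = w * (a * w * (x * w) * (a * w)) := by noncomm_ring
        _ = w * (a * w) := by rw [Z3]
        _ = w * a * w := by noncomm_ring
  · rintro ⟨⟨g, hg⟩, ⟨u, hu⟩⟩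
    exact ⟨_, main g u hg hu⟩
end

section
/- Let a ∈ 𝒜. The following are equivalent: (1) a has a w-weighted core inverse; (2) aw has a group inverse and there exists x ∈ 𝒜 such that xw(aw)² = aw and (wawx)* = wawx; (3) aw has a group inverse g and there exists x ∈ 𝒜 such that xw(aw) = (aw)g and (wawx)* = wawx. -/
open Filter

variable {A : Type*} [NormedRing A] [NormedAlgebra ℂ A] [StarRing A] [StarModule ℂ A]
  [CompleteSpace A]


lemma aux_group {R : Type*} [Ring R] (b z : R) (h1 : b * (z * z) = z) (h2 : z * (b * b) = b) :
    IsGroupInv b (z * z * b) := by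
  refine ⟨?_, ?_, ?_⟩
  · calc b * (z * z * b) * b = (b * (z * z)) * (b * b) := by noncomm_ring
    _ = z * (b * b) := by rw [h1]
    _ = b := h2
  · calc (z * z * b) * b * (z * z * b) = z * ((z * (b * b)) * (z * z)) * b := by noncomm_ring
    _ = z * (b * (z * z)) * b := by rw [h2]
    _ = z * z * b := by rw [h1]
  · have L : b * (z * z * b) = z * b := by
      calc b * (z * z * b) = (b * (z * z)) * b := by noncomm_ring
      _ = z * b := by rw [h1]
    have R0 : (z * z * b) * b = z * b := by
      calc (z * z * b) * b = z * (z * (b * b)) := by noncomm_ring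
      _ = z * b := by rw [h2]
    rw [L, R0]

/-- Corollary 2.5. -/
theorem isWCoreInv_exists_tfae (w a : A) :
    List.TFAE
      [ ∃ x, IsWCoreInv w a x,
        (∃ g, IsGroupInv (a * w) g) ∧
          ∃ x, x * w * (a * w) ^ 2 = a * w ∧ star (w * a * w * x) = w * a * w * x,
        ∃ g, IsGroupInv (a * w) g ∧
          ∃ x, x * w * (a * w) = a * w * g ∧ star (w * a * w * x) = w * a * w * x ] := by
  tfae_have 1 → 2 := by
    rintro ⟨x, h1, h2, h3⟩
    refine ⟨⟨(x*w) * (x*w) * (a*w), ?_⟩, x, h3, h2⟩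
    apply aux_group
    · calc (a * w) * ((x*w) * (x*w)) = (a * (w * x) ^ 2) * w := by noncomm_ring
      _ = x * w := by rw [h1]
    · calc (x*w) * ((a*w) * (a*w)) = x * w * (a * w) ^ 2 := by noncomm_ring
      _ = a * w := h3
  tfae_have 2 → 3 := by
    rintro ⟨⟨g, hg1, hg2, hg3⟩, x, hx1, hx2⟩
    have hbbg : (a*w) * ((a*w) * g) = a * w := by
      calc (a*w) * ((a*w) * g) = (a*w) * (g * (a*w)) := by rw [← hg3]
      _ = a * w * g * (a * w) := by noncomm_ring
      _ = a * w := hg1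
    refine ⟨g, ⟨hg1, hg2, hg3⟩, x, ?_, hx2⟩
    calc x * w * (a * w) = x * w * ((a*w) * ((a*w) * g)) := by rw [hbbg]
    _ = (x * w * (a * w) ^ 2) * g := by noncomm_ring
    _ = a * w * g := by rw [hx1]
  tfae_have 3 → 1 := by
    rintro ⟨g, ⟨hg1, hg2, hg3⟩, x, hx1, hx2⟩
    have hbbg : (a*w) * ((a*w) * g) = a * w := by
      calc (a*w) * ((a*w) * g) = (a*w) * (g * (a*w)) := by rw [← hg3]
      _ = a * w * g * (a * w) := by noncomm_ring
      _ = a * w := hg1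
    have hzb2 : x * w * ((a*w) * (a*w)) = a * w := by
      calc x * w * ((a*w) * (a*w)) = (x * w * (a * w)) * (a*w) := by noncomm_ring
      _ = a * w * g * (a * w) := by rw [hx1]
      _ = a * w := hg1
    refine ⟨a * w * g * x, ?_, ?_, ?_⟩
    · calc a * (w * (a * w * g * x)) ^ 2
          = ((a*w) * ((a*w) * g)) * x * w * (a * w * g * x) := by noncomm_ring
      _ = (a*w) * x * w * (a * w * g * x) := by rw [hbbg]
      _ = (a*w) * (x * w * (a * w)) * (g * x) := by noncomm_ring
      _ = (a*w) * (a * w * g) * (g * x) := by rw [hx1]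
      _ = ((a*w) * ((a*w) * g)) * (g * x) := by noncomm_ring
      _ = (a*w) * (g * x) := by rw [hbbg]
      _ = a * w * g * x := by noncomm_ring
    · have : w * a * w * (a * w * g * x) = w * a * w * x := by
        calc w * a * w * (a * w * g * x) = w * ((a*w) * ((a*w) * g)) * x := by noncomm_ring
        _ = w * (a * w) * x := by rw [hbbg]
        _ = w * a * w * x := by noncomm_ring
      rw [this, hx2]
    · calc a * w * g * x * w * (a * w) ^ 2
          = (a*w) * g * (x * w * ((a*w) * (a*w))) := by noncomm_ring
      _ = (a*w) * g * (a * w) := by rw [hzb2]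
      _ = a * w := hg1
  tfae_finish
end

section
/- Let a ∈ 𝒜. Then a has a w-weighted core inverse if and only if aw has a group inverse and there exists x ∈ 𝒜 such that x(waw)x = x, (waw)x(waw) = waw, x𝒜 = (aw)𝒜, and x*𝒜 ⊆ (waw)𝒜. -/
open Filter

variable {A : Type*} [NormedRing A] [NormedAlgebra ℂ A] [StarRing A] [StarModule ℂ A]
  [CompleteSpace A]

/-- Lemma 2.6. -/
theorem isWCoreInv_exists_iff_group_and (w a : A) :
    (∃ x, IsWCoreInv w a x) ↔
      (∃ g, IsGroupInv (a * w) g) ∧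
      ∃ x : A, x * (w * a * w) * x = x ∧ w * a * w * x * (w * a * w) = w * a * w ∧
        {y : A | ∃ r, y = x * r} = {y : A | ∃ r, y = a * w * r} ∧
        {y : A | ∃ r, y = star x * r} ⊆ {y : A | ∃ r, y = w * a * w * r} := by
  constructor
  · rintro ⟨x, h1, h2, h3⟩
    have h1' : a * w * x * w * x = x := by
      calc a * w * x * w * x = a * (w * x) ^ 2 := by noncomm_ring
        _ = x := h1
    have D2 : x * (w * a * w) * x = x := by
      calc x * (w * a * w) * x = x * (w * a * w) * (a * w * x * w * x) := by rw [h1']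
        _ = x * w * (a * w) ^ 2 * (x * w * x) := by noncomm_ring
        _ = a * w * (x * w * x) := by rw [h3]
        _ = a * w * x * w * x := by noncomm_ring
        _ = x := h1'
    have D1 : a * w * x * w * (a * w) = a * w := by
      calc a * w * x * w * (a * w) = a * w * x * w * (x * w * (a * w) ^ 2) := by rw [h3]
        _ = a * w * x * w * x * w * (a * w) ^ 2 := by noncomm_ring
        _ = x * w * (a * w) ^ 2 := by rw [h1']
        _ = a * w := h3
    have D3 : w * a * w * x * (w * a * w) = w * a * w := by
      calc w * a * w * x * (w * a * w) = w * (a * w * x * w * (a * w)) := by noncomm_ring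
        _ = w * (a * w) := by rw [D1]
        _ = w * a * w := by noncomm_ring
    have T1 : a * w * (x * w * (x * w)) = x * w := by
      calc a * w * (x * w * (x * w)) = a * w * x * w * x * w := by noncomm_ring
        _ = x * w := by rw [h1']
    have T2 : x * w * (a * w) * (x * w) = x * w := by
      calc x * w * (a * w) * (x * w) = x * (w * a * w) * x * w := by noncomm_ring
        _ = x * w := by rw [D2]
    have C1 : a * w * (x * w * (x * w) * (a * w)) = x * w * (a * w) := by
      calc a * w * (x * w * (x * w) * (a * w))
          = a * w * (x * w * (x * w)) * (a * w) := by noncomm_ring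
        _ = x * w * (a * w) := by rw [T1]
    have C2 : x * w * (x * w) * (a * w) * (a * w) = x * w * (a * w) := by
      calc x * w * (x * w) * (a * w) * (a * w)
          = x * w * (x * w * (a * w) ^ 2) := by noncomm_ring
        _ = x * w * (a * w) := by rw [h3]
    refine ⟨⟨x * w * (x * w) * (a * w), ?_, ?_, ?_⟩, x, D2, D3, ?_, ?_⟩
    · calc a * w * (x * w * (x * w) * (a * w)) * (a * w)
          = x * w * (a * w) * (a * w) := by rw [C1]
        _ = x * w * (a * w) ^ 2 := by noncomm_ring
        _ = a * w := h3
    · calc x * w * (x * w) * (a * w) * (a * w) * (x * w * (x * w) * (a * w))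
          = x * w * (a * w) * (x * w * (x * w) * (a * w)) := by rw [C2]
        _ = x * w * (a * w) * (x * w) * (x * w) * (a * w) := by noncomm_ring
        _ = x * w * (x * w) * (a * w) := by rw [T2]
    · rw [C1, C2]
    · ext y
      simp only [Set.mem_setOf_eq]
      constructor
      · rintro ⟨r, rfl⟩
        refine ⟨x * w * x * r, ?_⟩
        calc x * r = a * w * x * w * x * r := by rw [h1']
          _ = a * w * (x * w * x * r) := by noncomm_ring
      · rintro ⟨r, rfl⟩
        refine ⟨w * (a * w) ^ 2 * r, ?_⟩
        calc a * w * r = x * w * (a * w) ^ 2 * r := by rw [h3]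
          _ = x * (w * (a * w) ^ 2 * r) := by noncomm_ring
    · rintro y ⟨r, rfl⟩
      have S : star x = w * a * w * (x * star x) := by
        calc star x = star (x * (w * a * w * x)) := by
              rw [show x * (w * a * w * x) = x * (w * a * w) * x from by noncomm_ring, D2]
          _ = star (w * a * w * x) * star x := by rw [star_mul]
          _ = w * a * w * x * star x := by rw [h2]
          _ = w * a * w * (x * star x) := by noncomm_ring
      refine ⟨x * star x * r, ?_⟩
      calc star x * r = w * a * w * (x * star x) * r := by rw [← S]
        _ = w * a * w * (x * star x * r) := by noncomm_ring
  · rintro ⟨⟨g, hg1, hg2, hg3⟩, x, k1, k2, k3, k4⟩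
    have mem1 : (a * w) ∈ {y : A | ∃ r, y = x * r} := by
      rw [k3]
      refine ⟨g * (a * w), ?_⟩
      calc a * w = a * w * g * (a * w) := hg1.symm
        _ = a * w * (g * (a * w)) := by noncomm_ring
    obtain ⟨r, hr⟩ := mem1
    have mem2 : x ∈ {y : A | ∃ r, y = a * w * r} := by
      rw [← k3]
      refine ⟨w * a * w * x, ?_⟩
      calc x = x * (w * a * w) * x := k1.symm
        _ = x * (w * a * w * x) := by noncomm_ring
    obtain ⟨s, hs⟩ := mem2
    have mem3 : star x ∈ {y : A | ∃ r, y = w * a * w * r} := by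
      apply k4
      refine ⟨star (x * (w * a * w)), ?_⟩
      calc star x = star (x * (w * a * w) * x) := by rw [k1]
        _ = star x * star (x * (w * a * w)) := by rw [star_mul]
    obtain ⟨u, hu⟩ := mem3
    have F4 : a * w * (g * x) = x := by
      calc a * w * (g * x) = a * w * g * (a * w) * s := by rw [hs]; noncomm_ring
        _ = a * w * s := by rw [hg1]
        _ = x := hs.symm
    have F5 : x * (w * a * w) * (a * w) = a * w := by
      calc x * (w * a * w) * (a * w) = x * (w * a * w) * (x * r) := by rw [← hr]
        _ = x * (w * a * w) * x * r := by noncomm_ring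
        _ = x * r := by rw [k1]
        _ = a * w := hr.symm
    have G1 : a * w * (g * g) = g := by
      calc a * w * (g * g) = a * w * g * g := by noncomm_ring
        _ = g * (a * w) * g := by rw [hg3]
        _ = g := hg2
    have F6 : x * (w * a * w) * g = g := by
      calc x * (w * a * w) * g = x * (w * a * w) * (a * w * (g * g)) := by rw [G1]
        _ = x * (w * a * w) * (a * w) * (g * g) := by noncomm_ring
        _ = a * w * (g * g) := by rw [F5]
        _ = g := G1
    refine ⟨x, ?_, ?_, ?_⟩
    · calc a * (w * x) ^ 2 = a * w * x * (w * x) := by noncomm_ring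
        _ = a * w * x * (w * (a * w * (g * x))) := by rw [F4]
        _ = a * w * (x * (w * a * w) * g * x) := by noncomm_ring
        _ = a * w * (g * x) := by rw [F6]
        _ = x := F4
    · have hp : star (w * a * w * x) = w * a * w * (u * star (w * a * w)) := by
        calc star (w * a * w * x) = star x * star (w * a * w) := by rw [star_mul]
          _ = w * a * w * u * star (w * a * w) := by rw [hu]
          _ = w * a * w * (u * star (w * a * w)) := by noncomm_ring
      have P1 : w * a * w * x * star (w * a * w * x) = star (w * a * w * x) := by
        calc w * a * w * x * star (w * a * w * x)
            = w * a * w * x * (w * a * w * (u * star (w * a * w))) := by rw [hp]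
          _ = w * a * w * x * (w * a * w) * (u * star (w * a * w)) := by noncomm_ring
          _ = w * a * w * (u * star (w * a * w)) := by rw [k2]
          _ = star (w * a * w * x) := hp.symm
      have P3 : star (star (w * a * w * x)) = star (w * a * w * x) := by
        calc star (star (w * a * w * x))
            = star (w * a * w * x * star (w * a * w * x)) := by rw [P1]
          _ = star (star (w * a * w * x)) * star (w * a * w * x) := star_mul _ _
          _ = w * a * w * x * star (w * a * w * x) := by rw [star_star]
          _ = star (w * a * w * x) := P1
      calc star (w * a * w * x) = star (star (w * a * w * x)) := P3.symm
        _ = w * a * w * x := star_star _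
    · calc x * w * (a * w) ^ 2 = x * (w * a * w) * (a * w) := by noncomm_ring
        _ = a * w := F5
end

section
/- Let a ∈ 𝒜. Then a has a core inverse if and only if a has a group inverse a^# and a has an (a^#, (a^#)*)-inverse; in this case the core inverse a^{⊛} equals the (a^#, (a^#)*)-inverse of a. -/
open Filter

variable {A : Type*} [NormedRing A] [NormedAlgebra ℂ A] [StarRing A] [StarModule ℂ A]
  [CompleteSpace A]


private lemma bcInv_isCoreInv {R : Type*} [Ring R] [StarRing R] {a g y : R}
    (hg : IsGroupInv a g) (hy : IsBCInv g (star g) a y) : IsCoreInv a y := by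
  obtain ⟨G1, G2, G3⟩ := hg
  obtain ⟨B1, B2, ⟨s, B3⟩, ⟨t, B4⟩⟩ := hy
  have G1' : a * (g * a) = a := by rw [← mul_assoc]; exact G1
  have B1' : y * (a * g) = g := by rw [← mul_assoc]; exact B1
  have B2' : star g * (a * y) = star g := by rw [← mul_assoc]; exact B2
  have B3' : g * (s * y) = y := by rw [← mul_assoc]; exact B3.symm
  have B4' : y * (t * star g) = y := by rw [← mul_assoc]; exact B4.symm
  -- y * a ^ 2 = a
  have e : a * (g * (a * a)) = a * a := by
    have h : a * (g * (a * a)) = (a * (g * a)) * a := by simp only [mul_assoc]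
    rw [h, G1']
  have hya : y * a ^ 2 = a := by
    calc y * a ^ 2 = y * (a * a) := by rw [pow_two]
      _ = y * (a * (g * (a * a))) := congrArg (fun z => y * z) e.symm
      _ = (y * (a * g)) * (a * a) := by simp only [mul_assoc]
      _ = g * (a * a) := by rw [B1']
      _ = a := by rw [← mul_assoc, ← G3, mul_assoc, G1']
  -- hermitian part
  have hst : star y * (star a * g) = g := by
    have h := congrArg star B2
    simpa only [star_mul, star_star, mul_assoc] using h
  have hqp : a * (g * (a * y)) = a * y := by
    have h : a * (g * (a * y)) = (a * (g * a)) * y := by simp only [mul_assoc]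
    rw [h, G1']
  have hpq : star y * (star a * (a * g)) = a * g := by
    have h := congrArg (fun z => z * a) hst
    simp only [mul_assoc] at h
    rw [← G3] at h
    exact h
  have hpp : star y * (star a * (a * y)) = a * y := by
    calc star y * (star a * (a * y))
        = star y * (star a * (a * (g * (a * y)))) := by rw [hqp]
      _ = (star y * (star a * (a * g))) * (a * y) := by simp only [mul_assoc]
      _ = (a * g) * (a * y) := by rw [hpq]
      _ = a * y := by rw [mul_assoc]; exact hqp
  have herm : star (a * y) = a * y := by
    have h := congrArg star hpp
    simp only [star_mul, star_star, mul_assoc] at h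
    rw [star_mul, ← h]
    exact hpp
  -- a * y ^ 2 = y
  have hayg : a * (y * g) = g := by
    have h : a * y * g = g := by
      rw [← herm, star_mul, mul_assoc]; exact hst
    rw [← mul_assoc]; exact h
  have hay2 : a * y ^ 2 = y := by
    calc a * y ^ 2 = a * (y * y) := by rw [pow_two]
      _ = a * (y * (g * (s * y))) := by rw [B3']
      _ = (a * (y * g)) * (s * y) := by simp only [mul_assoc]
      _ = g * (s * y) := by rw [hayg]
      _ = y := B3'
  exact ⟨hay2, herm, hya⟩

private lemma coreInv_to_bcInv {R : Type*} [Ring R] [StarRing R] {a x : R}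
    (hx : IsCoreInv a x) :
    IsGroupInv a (x * (x * a)) ∧ IsBCInv (x * (x * a)) (star (x * (x * a))) a x := by
  obtain ⟨h1, h2, h3⟩ := hx
  have A1 : a * (x * x) = x := by rw [← pow_two]; exact h1
  have A3 : x * (a * a) = a := by rw [← pow_two]; exact h3
  have hsym : star x * star a = a * x := by rw [← star_mul]; exact h2
  have axa : a * (x * a) = a := by
    calc a * (x * a) = a * (x * (x * (a * a))) := by rw [A3]
      _ = (a * (x * x)) * (a * a) := by simp only [mul_assoc]
      _ = x * (a * a) := by rw [A1]
      _ = a := A3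
  have xax : x * (a * x) = x := by
    calc x * (a * x) = x * (a * (a * (x * x))) := by rw [A1]
      _ = (x * (a * a)) * (x * x) := by simp only [mul_assoc]
      _ = a * (x * x) := by rw [A3]
      _ = x := A1
  have hag : a * (x * (x * a)) = x * a := by
    have h : a * (x * (x * a)) = (a * (x * x)) * a := by simp only [mul_assoc]
    rw [h, A1]
  have hga : (x * (x * a)) * a = x * a := by
    simp only [mul_assoc]
    rw [A3]
  have hxag : (x * a) * (x * (x * a)) = x * (x * a) := by
    calc (x * a) * (x * (x * a)) = (x * (a * x)) * (x * a) := by simp only [mul_assoc]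
      _ = x * (x * a) := by rw [xax]
  have haxg : (a * x) * (x * (x * a)) = x * (x * a) := by
    calc (a * x) * (x * (x * a)) = (a * (x * x)) * (x * a) := by simp only [mul_assoc]
      _ = x * (x * a) := by rw [A1]
  have hgrp : IsGroupInv a (x * (x * a)) := by
    refine ⟨?_, ?_, ?_⟩
    · -- a * g * a = a
      rw [hag, mul_assoc, A3]
    · -- g * a * g = g
      rw [hga]
      exact hxag
    · rw [hag, hga]
  have hstar_a : star a * (star a * star x) = star a := by
    have h := congrArg star A3
    simpa only [star_mul, mul_assoc] using h
  have hxx : x * (star x * star a) = x := by rw [hsym]; exact xax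
  have hbc : IsBCInv (x * (x * a)) (star (x * (x * a))) a x := by
    refine ⟨?_, ?_, ⟨a, ?_⟩, ⟨star x * (star a * star a), ?_⟩⟩
    · -- x * a * g = g
      rw [mul_assoc] at hxag
      rw [mul_assoc]; exact hxag
    · -- star g * a * x = star g
      have h := congrArg star haxg
      rw [star_mul, h2] at h
      rw [mul_assoc]; exact h
    · -- x = g * a * x
      rw [hga, mul_assoc, xax]
    · -- x = x * t * star g
      have sg : star (x * (x * a)) = star a * (star x * star x) := by
        simp only [star_mul, mul_assoc]
      have hiv : x * ((star x * (star a * star a)) * (star a * (star x * star x))) = x := by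
        calc x * ((star x * (star a * star a)) * (star a * (star x * star x)))
            = x * (star x * (star a * ((star a * (star a * star x)) * star x))) := by
              simp only [mul_assoc]
          _ = x * (star x * (star a * (star a * star x))) := by
              conv_lhs => rw [hstar_a]
          _ = x * (star x * star a) := by conv_lhs => rw [hstar_a]
          _ = x := hxx
      rw [sg, mul_assoc]
      exact hiv.symm
  exact ⟨hgrp, hbc⟩

/-- Corollary 2.8. -/
theorem isCoreInv_exists_iff_bcInv (a : A) :
    ((∃ x, IsCoreInv a x) ↔
      ∃ g, IsGroupInv a g ∧ ∃ y, IsBCInv g (star g) a y) ∧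
    (∀ g y, IsGroupInv a g → IsBCInv g (star g) a y → IsCoreInv a y) := by
  constructor
  · constructor
    · rintro ⟨x, hx⟩
      obtain ⟨hgrp, hbc⟩ := coreInv_to_bcInv hx
      exact ⟨x * (x * a), hgrp, x, hbc⟩
    · rintro ⟨g, hg, y, hy⟩
      exact ⟨y, bcInv_isCoreInv hg hy⟩
  · intro g y hg hy
    exact bcInv_isCoreInv hg hy
end

section
/- Let a ∈ 𝒜. The following are equivalent: (1) a has a generalized w-weighted core-EP inverse; (2) there exist z, y ∈ 𝒜 such that a = z + y, (wz)*(wy) = 0, ywz = 0, z has a w-weighted core inverse, and y is w-quasinilpotent; (3) there exist z, y ∈ 𝒜 such that a = z + y, ywz = 0, z has a w-weighted core inverse, and y is w-quasinilpotent. In this case a^{⊛d,w} = z^{⊛,w}. -/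
open Filter

variable {A : Type*} [NormedRing A] [NormedAlgebra ℂ A] [StarRing A] [StarModule ℂ A]
  [CompleteSpace A]


private lemma root_tendsto_iff {A : Type*} [NormedRing A] (c : ℕ → A) :
    Tendsto (fun n : ℕ => ‖c n‖ ^ (1 / (n : ℝ))) atTop (nhds 0) ↔
      ∀ ε : ℝ, 0 < ε → ∀ᶠ n : ℕ in atTop, ‖c n‖ ≤ ε ^ n := by
  constructor
  · intro h ε hε
    filter_upwards [h.eventually_lt_const hε, eventually_ge_atTop 1] with n h1 h2
    have hn0 : (n : ℝ) ≠ 0 := by positivity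
    have key : (‖c n‖ ^ (1 / (n : ℝ))) ^ (n : ℕ) = ‖c n‖ := by
      rw [← Real.rpow_natCast (‖c n‖ ^ (1 / (n : ℝ))) n, ← Real.rpow_mul (norm_nonneg _),
        one_div_mul_cancel hn0, Real.rpow_one]
    calc ‖c n‖ = (‖c n‖ ^ (1 / (n : ℝ))) ^ (n : ℕ) := key.symm
      _ ≤ ε ^ n := pow_le_pow_left₀ (Real.rpow_nonneg (norm_nonneg _) _) h1.le n
  · intro h
    rw [NormedAddCommGroup.tendsto_nhds_zero]
    intro ε hε
    filter_upwards [h (ε / 2) (half_pos hε), eventually_ge_atTop 1] with n h1 h2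
    have hn0 : (n : ℝ) ≠ 0 := by positivity
    have key : ((ε / 2 : ℝ) ^ (n : ℕ)) ^ (1 / (n : ℝ)) = ε / 2 := by
      rw [← Real.rpow_natCast (ε / 2) n, ← Real.rpow_mul (half_pos hε).le,
        mul_one_div_cancel hn0, Real.rpow_one]
    have h3 : ‖c n‖ ^ (1 / (n : ℝ)) ≤ ε / 2 := by
      rw [← key]
      exact Real.rpow_le_rpow (norm_nonneg _) h1 (by positivity)
    have h4 : (0:ℝ) ≤ ‖c n‖ ^ (1 / (n : ℝ)) := Real.rpow_nonneg (norm_nonneg _) _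
    rw [Real.norm_eq_abs, abs_of_nonneg h4]
    exact lt_of_le_of_lt h3 (half_lt_self hε)

private lemma dominated_root {A : Type*} [NormedRing A] (c d : ℕ → A) (K L : ℝ) (k : ℕ)
    (hK : 0 ≤ K) (hL : 0 ≤ L)
    (hc : Tendsto (fun n : ℕ => ‖c n‖ ^ (1 / (n : ℝ))) atTop (nhds 0))
    (hd : ∀ᶠ n : ℕ in atTop, ‖d n‖ ≤ K * L ^ n * ‖c (n - k)‖) :
    Tendsto (fun n : ℕ => ‖d n‖ ^ (1 / (n : ℝ))) atTop (nhds 0) := by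
  rw [root_tendsto_iff] at hc ⊢
  intro ε hε
  set δ : ℝ := ε / (2 * (L + 1)) with hδdef
  have hδ : 0 < δ := by positivity
  have hLδ : L * δ ≤ ε / 2 := by
    rw [hδdef, mul_div_assoc']
    rw [div_le_div_iff₀ (by positivity) (by norm_num)]
    nlinarith
  obtain ⟨N, hN⟩ := eventually_atTop.mp (hc δ hδ)
  have h2pow : ∀ᶠ n : ℕ in atTop, K / δ ^ k ≤ (2:ℝ) ^ n :=
    (tendsto_pow_atTop_atTop_of_one_lt (by norm_num : (1:ℝ) < 2)).eventually_ge_atTop _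
  filter_upwards [hd, h2pow, eventually_ge_atTop (N + k)] with n hdn h2n hnk
  have hkn : k ≤ n := le_trans (Nat.le_add_left _ _) hnk
  have hcnk : ‖c (n - k)‖ ≤ δ ^ (n - k) := hN _ (by omega)
  calc ‖d n‖ ≤ K * L ^ n * ‖c (n - k)‖ := hdn
    _ ≤ K * L ^ n * δ ^ (n - k) := by
        exact mul_le_mul_of_nonneg_left hcnk (mul_nonneg hK (pow_nonneg hL n))
    _ = (K / δ ^ k) * (L * δ) ^ n := by
        rw [pow_sub₀ _ hδ.ne' hkn, mul_pow]
        field_simp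
    _ ≤ (K / δ ^ k) * (ε / 2) ^ n := by
        exact mul_le_mul_of_nonneg_left
          (pow_le_pow_left₀ (by positivity) hLδ n) (by positivity)
    _ = (K / δ ^ k) / 2 ^ n * ε ^ n := by rw [div_pow ε 2 n]; generalize (2:ℝ) ^ n = t; ring
    _ ≤ 1 * ε ^ n := by
        apply mul_le_mul_of_nonneg_right _ (by positivity)
        rw [div_le_one (by positivity)]
        exact h2n
    _ = ε ^ n := one_mul _

private lemma eq_zero_of_dominated {A : Type*} [NormedRing A] (c : ℕ → A) (v : A) (K L : ℝ)
    (hK : 0 ≤ K) (hL : 0 ≤ L)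
    (hc : Tendsto (fun n : ℕ => ‖c n‖ ^ (1 / (n : ℝ))) atTop (nhds 0))
    (hv : ∀ᶠ n : ℕ in atTop, ‖v‖ ≤ K * L ^ n * ‖c n‖) : v = 0 := by
  rw [root_tendsto_iff] at hc
  set δ : ℝ := 1 / (2 * (L + 1)) with hδdef
  have hδ : 0 < δ := by positivity
  have hLδ : L * δ ≤ 1 / 2 := by
    rw [hδdef, mul_div_assoc']
    rw [div_le_div_iff₀ (by positivity) (by norm_num)]
    nlinarith
  have h1 : ∀ᶠ n : ℕ in atTop, ‖v‖ ≤ K * (1 / 2 : ℝ) ^ n := by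
    filter_upwards [hv, hc δ hδ] with n h1 h2
    calc ‖v‖ ≤ K * L ^ n * ‖c n‖ := h1
      _ ≤ K * L ^ n * δ ^ n := mul_le_mul_of_nonneg_left h2 (mul_nonneg hK (pow_nonneg hL n))
      _ = K * (L * δ) ^ n := by rw [mul_pow]; ring
      _ ≤ K * (1 / 2 : ℝ) ^ n :=
          mul_le_mul_of_nonneg_left (pow_le_pow_left₀ (by positivity) hLδ n) hK
  have h2 : Tendsto (fun n : ℕ => K * (1 / 2 : ℝ) ^ n) atTop (nhds 0) := by
    have := (tendsto_pow_atTop_nhds_zero_of_lt_one (by norm_num : (0:ℝ) ≤ 1/2)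
      (by norm_num : (1/2:ℝ) < 1)).const_mul K
    simpa using this
  have h3 : ‖v‖ ≤ 0 := ge_of_tendsto h2 h1
  exact norm_le_zero_iff.mp h3

private lemma q_dir {A : Type*} [NormedRing A] [StarRing A] (w a z y u : A)
    (hzy : a = z + y) (hyz : y * w * z = 0)
    (hu : IsWCoreInv w z u) (hy : IsWQuasinilpotent w y) : IsWCoreEPInv w a u := by
  obtain ⟨h1, h2, h3⟩ := hu
  have hywu : y * w * u = 0 := by
    conv_lhs => rw [← h1]
    have e : y * w * (z * (w * u) ^ 2) = y * w * z * (w * u) ^ 2 := by noncomm_ring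
    rw [e, hyz, zero_mul]
  have hywzw : y * w * (z * w) = 0 := by
    have e : y * w * (z * w) = y * w * z * w := by noncomm_ring
    rw [e, hyz, zero_mul]
  refine ⟨?_, ?_, ?_⟩
  · rw [hzy, add_mul, h1]
    have e : y * (w * u) ^ 2 = y * w * u * (w * u) := by noncomm_ring
    rw [e, hywu, zero_mul, add_zero]
  · have e : w * a * w * u = w * z * w * u := by
      rw [hzy]
      have e2 : w * (z + y) * w * u = w * z * w * u + w * (y * w * u) := by noncomm_ring
      rw [e2, hywu, mul_zero, add_zero]
    rw [e]; exact h2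
  · have base : (a * w) ^ 1 - u * w * (a * w) ^ (1 + 1) = (1 - u * w * (a * w)) * (y * w) ^ 1 := by
      rw [hzy]
      have e1 : ((z + y) * w) ^ 1 - u * w * ((z + y) * w) ^ (1 + 1)
          = z * w + y * w - (u * w * (z * w) ^ 2 + u * w * (z * w * (y * w))
            + u * w * (y * w * (z * w)) + u * w * (y * w * (y * w))) := by noncomm_ring
      have e2 : (1 - u * w * ((z + y) * w)) * (y * w) ^ 1
          = y * w - (u * w * (z * w * (y * w)) + u * w * (y * w * (y * w))) := by noncomm_ring
      rw [e1, e2, h3, hywzw, mul_zero, add_zero]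
      abel
    have hstep : ∀ n : ℕ, (a * w) ^ (n + 1) - u * w * (a * w) ^ (n + 1 + 1)
        = (1 - u * w * (a * w)) * (y * w) ^ (n + 1) := by
      intro n
      induction n with
      | zero => exact base
      | succ n ih =>
        have hz : (y * w) ^ (n + 1) * (z * w) = 0 := by
          rw [pow_succ, mul_assoc, hywzw, mul_zero]
        have e1 : (a * w) ^ (n + 1 + 1) - u * w * (a * w) ^ (n + 1 + 1 + 1)
            = ((a * w) ^ (n + 1) - u * w * (a * w) ^ (n + 1 + 1)) * (a * w) := by
          rw [pow_succ (a * w) (n + 1), pow_succ (a * w) (n + 1 + 1)]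
          noncomm_ring
        rw [e1, ih]
        have haw : a * w = z * w + y * w := by rw [hzy, add_mul]
        set s := 1 - u * w * (a * w) with hs
        rw [haw, mul_add, mul_assoc s, hz, mul_zero, zero_add,
          pow_succ (y * w) (n + 1), mul_assoc]
    refine dominated_root (fun n => (y * w) ^ n) _ ‖1 - u * w * (a * w)‖ 1 0
      (norm_nonneg _) zero_le_one hy ?_
    filter_upwards [eventually_ge_atTop 1] with n hn
    obtain ⟨m, rfl⟩ : ∃ m, n = m + 1 := ⟨n - 1, by omega⟩
    rw [hstep m]
    simpa using norm_mul_le (1 - u * w * (a * w)) ((y * w) ^ (m + 1))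

private lemma one_to_two {A : Type*} [NormedRing A] [StarRing A] (w a x : A)
    (hx : IsWCoreEPInv w a x) :
    ∃ z y : A, a = z + y ∧ star (w * z) * (w * y) = 0 ∧ y * w * z = 0 ∧
      (∃ u, IsWCoreInv w z u) ∧ IsWQuasinilpotent w y := by
  obtain ⟨h1, h2, h3⟩ := hx
  have h1' : a * w * x * w * x = x := by
    have e : a * w * x * w * x = a * (w * x) ^ 2 := by noncomm_ring
    rw [e, h1]
  have hbt : a * w * (x * w * (x * w)) = x * w := by
    have e : a * w * (x * w * (x * w)) = a * w * x * w * x * w := by noncomm_ring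
    rw [e, h1']
  have tpow : ∀ n : ℕ, x * w = (a * w) ^ n * (x * w) ^ (n + 1) := by
    intro n
    induction n with
    | zero => simp
    | succ n ih =>
      calc x * w = (a * w) ^ n * (x * w) ^ (n + 1) := ih
        _ = (a * w) ^ n * ((x * w) * (x * w) ^ n) := by rw [pow_succ']
        _ = (a * w) ^ n * ((a * w * (x * w * (x * w))) * (x * w) ^ n) := by rw [hbt]
        _ = (a * w) ^ (n + 1) * (x * w) ^ (n + 1 + 1) := by
            rw [pow_succ (a * w) n, pow_succ' (x * w) (n + 1), pow_succ' (x * w) n]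
            simp only [mul_assoc]
  -- key identity: t b^{k+1} t = b^k t
  have tbkt : ∀ k : ℕ, x * w * (a * w) ^ (k + 1) * (x * w) = (a * w) ^ k * (x * w) := by
    intro k
    have key : ∀ n : ℕ, x * w * (a * w) ^ (k + 1) * (x * w) - (a * w) ^ k * (x * w)
        = -(((a * w) ^ (n + k) - x * w * (a * w) ^ (n + k + 1)) * (x * w) ^ (n + 1)) := by
      intro n
      have ek1 : (a * w) ^ (n + k + 1) = (a * w) ^ (k + 1) * (a * w) ^ n := by
        rw [← pow_add]; congr 1; omega
      have ek2 : (a * w) ^ (n + k) = (a * w) ^ k * (a * w) ^ n := by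
        rw [← pow_add]; congr 1; omega
      calc x * w * (a * w) ^ (k + 1) * (x * w) - (a * w) ^ k * (x * w)
          = x * w * (a * w) ^ (k + 1) * ((a * w) ^ n * (x * w) ^ (n + 1))
            - (a * w) ^ k * ((a * w) ^ n * (x * w) ^ (n + 1)) := by rw [← tpow n]
        _ = x * w * (a * w) ^ (n + k + 1) * (x * w) ^ (n + 1)
            - (a * w) ^ (n + k) * (x * w) ^ (n + 1) := by
            rw [ek1, ek2]; simp only [mul_assoc]
        _ = -(((a * w) ^ (n + k) - x * w * (a * w) ^ (n + k + 1)) * (x * w) ^ (n + 1)) := by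
            rw [sub_mul, neg_sub]
    set L : ℝ := max ‖x * w‖ 1 with hL
    have hL1 : (1:ℝ) ≤ L := le_max_right _ _
    have hLx : ‖x * w‖ ≤ L := le_max_left _ _
    have hv := eq_zero_of_dominated (fun n => (a * w) ^ n - x * w * (a * w) ^ (n + 1))
      (x * w * (a * w) ^ (k + 1) * (x * w) - (a * w) ^ k * (x * w)) L L
      (le_trans zero_le_one hL1) (le_trans zero_le_one hL1) h3 ?_
    · exact sub_eq_zero.mp hv
    · filter_upwards [eventually_ge_atTop k] with m hm
      obtain ⟨n, rfl⟩ : ∃ n, m = n + k := ⟨m - k, by omega⟩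
      rw [key n]
      calc ‖-(((a * w) ^ (n + k) - x * w * (a * w) ^ (n + k + 1)) * (x * w) ^ (n + 1))‖
          = ‖((a * w) ^ (n + k) - x * w * (a * w) ^ (n + k + 1)) * (x * w) ^ (n + 1)‖ := norm_neg _
        _ ≤ ‖(a * w) ^ (n + k) - x * w * (a * w) ^ (n + k + 1)‖ * ‖(x * w) ^ (n + 1)‖ :=
            norm_mul_le _ _
        _ ≤ ‖(a * w) ^ (n + k) - x * w * (a * w) ^ (n + k + 1)‖ * ‖x * w‖ ^ (n + 1) := by
            exact mul_le_mul_of_nonneg_left (norm_pow_le' _ (Nat.succ_pos n)) (norm_nonneg _)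
        _ ≤ ‖(a * w) ^ (n + k) - x * w * (a * w) ^ (n + k + 1)‖ * L ^ (n + k + 1) := by
            refine mul_le_mul_of_nonneg_left ?_ (norm_nonneg _)
            calc ‖x * w‖ ^ (n + 1) ≤ L ^ (n + 1) :=
                pow_le_pow_left₀ (norm_nonneg _) hLx _
              _ ≤ L ^ (n + k + 1) := pow_le_pow_right₀ hL1 (by omega)
        _ = L * L ^ (n + k) * ‖(a * w) ^ (n + k) - x * w * (a * w) ^ (n + k + 1)‖ := by
            rw [pow_succ]; ring
  have tbt : x * w * (a * w) * (x * w) = x * w := by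
    have := tbkt 0
    simpa using this
  -- now define z and y
  refine ⟨a * w * x * w * a, a - a * w * x * w * a, by abel, ?_, ?_, ⟨x, ?_, ?_, ?_⟩, ?_⟩
  · -- star (w z) * (w y) = 0
    have e0 : w * (a * w * x * w * a) = (w * a * w * x) * (w * a) := by noncomm_ring
    have e1 : star (w * (a * w * x * w * a)) = star (w * a) * (w * a * w * x) := by
      rw [e0, star_mul, h2]
    rw [e1, mul_sub, mul_sub, sub_eq_zero, mul_assoc (star (w * a)), mul_assoc (star (w * a))]
    congr 1
    have e2 : (w * a * w * x) * (w * (a * w * x * w * a))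
        = w * (a * w * (x * w * (a * w) * (x * w)) * a) := by noncomm_ring
    have e3 : (w * a * w * x) * (w * a) = w * (a * w * (x * w) * a) := by noncomm_ring
    rw [e2, e3, tbt]
  · -- y w z = 0
    have tb2t : x * w * ((a * w) * (a * w)) * (x * w) = (a * w) * (x * w) := by
      have := tbkt 1
      have e : x * w * (a * w) ^ (1 + 1) * (x * w) = x * w * ((a * w) * (a * w)) * (x * w) := by
        rw [pow_succ, pow_one]
      rw [e, pow_one] at this
      exact this
    have e1 : (a - a * w * x * w * a) * w * (a * w * x * w * a)
        = (a * w) * ((a * w) * (x * w)) * a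
          - (a * w) * (x * w * ((a * w) * (a * w)) * (x * w)) * a := by noncomm_ring
    rw [e1, tb2t, sub_self]
  · -- z (w x)^2 = x
    have e : (a * w * x * w * a) * (w * x) ^ 2 = a * w * x * w * (a * w * x * w * x) := by
      noncomm_ring
    rw [e, h1', h1']
  · -- star (w z w x) = w z w x
    have e : w * (a * w * x * w * a) * w * x = (w * a * w * x) * (w * a * w * x) := by
      noncomm_ring
    rw [e, star_mul, h2]
  · -- x w (z w)^2 = z w
    have e : x * w * ((a * w * x * w * a) * w) ^ 2
        = (x * w * (a * w) * (x * w)) * ((a * w) * (a * w)) * ((x * w) * (a * w)) := by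
      noncomm_ring
    rw [e, tbt]
    have tb2t : x * w * ((a * w) * (a * w)) * (x * w) = (a * w) * (x * w) := by
      have := tbkt 1
      have e' : x * w * (a * w) ^ (1 + 1) * (x * w) = x * w * ((a * w) * (a * w)) * (x * w) := by
        rw [pow_succ, pow_one]
      rw [e', pow_one] at this
      exact this
    have e2 : x * w * ((a * w) * (a * w)) * ((x * w) * (a * w))
        = (x * w * ((a * w) * (a * w)) * (x * w)) * (a * w) := by noncomm_ring
    rw [e2, tb2t]
    noncomm_ring
  · -- y is w-quasinilpotent
    have hyw : ∀ m : ℕ, ((a - a * w * x * w * a) * w) ^ (m + 1)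
        = (a * w) * ((a * w) ^ m - x * w * (a * w) ^ (m + 1)) := by
      intro m
      induction m with
      | zero => noncomm_ring
      | succ m ih =>
        rw [pow_succ ((a - a * w * x * w * a) * w) (m + 1), ih]
        have H := tbkt (m + 1)
        rw [pow_succ (a * w) (m + 1), pow_succ (a * w) m] at H ⊢
        have e1 : (a * w) * ((a * w) ^ m - x * w * ((a * w) ^ m * (a * w)))
              * ((a - a * w * x * w * a) * w)
            = (a * w) * ((a * w) ^ m * (a * w))
              - (a * w) * ((a * w) ^ m * (a * w)) * (x * w) * (a * w)
              - (a * w) * (x * w * ((a * w) ^ m * (a * w)) * (a * w))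
              + (a * w) * (x * w * ((a * w) ^ m * (a * w) * (a * w)) * (x * w)) * (a * w) := by
          noncomm_ring
        rw [e1, H]
        noncomm_ring
    show Tendsto (fun n : ℕ => ‖((a - a * w * x * w * a) * w) ^ n‖ ^ (1 / (n : ℝ))) atTop (nhds 0)
    refine dominated_root (fun n => (a * w) ^ n - x * w * (a * w) ^ (n + 1))
      (fun n => ((a - a * w * x * w * a) * w) ^ n) ‖a * w‖ 1 1 (norm_nonneg _) zero_le_one h3 ?_
    filter_upwards [eventually_ge_atTop 1] with n hn
    obtain ⟨m, rfl⟩ : ∃ m, n = m + 1 := ⟨n - 1, by omega⟩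
    rw [hyw m]
    simpa using norm_mul_le (a * w) ((a * w) ^ m - x * w * (a * w) ^ (m + 1))


/-- Theorem 3.1. -/
theorem isWCoreEPInv_exists_tfae (w a : A) :
    (List.TFAE
      [ ∃ x, IsWCoreEPInv w a x,
        ∃ z y : A, a = z + y ∧ star (w * z) * (w * y) = 0 ∧ y * w * z = 0 ∧
          (∃ u, IsWCoreInv w z u) ∧ IsWQuasinilpotent w y,
        ∃ z y : A, a = z + y ∧ y * w * z = 0 ∧
          (∃ u, IsWCoreInv w z u) ∧ IsWQuasinilpotent w y ]) ∧
    (∀ z y u : A, a = z + y → y * w * z = 0 → IsWCoreInv w z u →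
      IsWQuasinilpotent w y → IsWCoreEPInv w a u) := by
  
  constructor
  · tfae_have 1 → 2 := by
      rintro ⟨x, hx⟩
      exact one_to_two w a x hx
    tfae_have 2 → 3 := by
      rintro ⟨z, y, e1, _, e3, e4, e5⟩
      exact ⟨z, y, e1, e3, e4, e5⟩
    tfae_have 3 → 1 := by
      rintro ⟨z, y, e1, e3, ⟨u, hu⟩, e5⟩
      exact ⟨u, q_dir w a z y u e1 e3 hu e5⟩
    tfae_finish
  · intro z y u e1 e2 e3 e4
    exact q_dir w a z y u e1 e2 e3 e4
end

section
/- Let a ∈ 𝒜 have a generalized w-weighted core-EP inverse a^{⊛d,w} and let b ∈ 𝒜 be w-quasinilpotent with bwa = 0. Then a + b has a generalized w-weighted core-EP inverse, and (a+b)^{⊛d,w} = a^{⊛d,w}. -/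
open Filter

variable {A : Type*} [NormedRing A] [NormedAlgebra ℂ A] [StarRing A] [StarModule ℂ A]
  [CompleteSpace A]


private lemma aux_log_tendsto' : Filter.Tendsto (fun n : ℕ => Real.log ((n:ℝ)+1) / (n:ℝ)) Filter.atTop (nhds 0) := by
  have hlo : Tendsto (fun x : ℝ => Real.log x / x) atTop (nhds 0) :=
    Real.isLittleO_log_id_atTop.tendsto_div_nhds_zero
  have hcomp : Tendsto (fun n : ℕ => Real.log ((n:ℝ)+1) / ((n:ℝ)+1)) atTop (nhds 0) :=
    hlo.comp (tendsto_atTop_add_const_right atTop 1 tendsto_natCast_atTop_atTop)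
  have h2 : Tendsto (fun n : ℕ => 2 * (Real.log ((n:ℝ)+1) / ((n:ℝ)+1))) atTop (nhds 0) := by
    simpa using hcomp.const_mul 2
  apply squeeze_zero' ?_ ?_ h2
  · filter_upwards [eventually_ge_atTop 0] with n _
    exact div_nonneg (Real.log_nonneg (by norm_num [Nat.cast_nonneg])) (Nat.cast_nonneg n)
  · filter_upwards [eventually_ge_atTop 1] with n hn
    have hn1 : (1:ℝ) ≤ (n:ℝ) := by exact_mod_cast hn
    have hlog : 0 ≤ Real.log ((n:ℝ)+1) := Real.log_nonneg (by linarith)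
    rw [div_le_iff₀ (by linarith), mul_comm (2:ℝ), mul_assoc, div_mul_eq_mul_div,
      le_div_iff₀ (by linarith)]
    nlinarith

private lemma aux_rpow_tendsto_one' {C : ℝ} (hC : 0 < C) :
    Filter.Tendsto (fun n : ℕ => (C * ((n:ℝ)+1)) ^ (1/(n:ℝ))) Filter.atTop (nhds 1) := by
  have heq : (fun n : ℕ => (C * ((n:ℝ)+1)) ^ (1/(n:ℝ)))
      = fun n : ℕ => Real.exp (Real.log (C*((n:ℝ)+1)) * (1/(n:ℝ))) := by
    funext n
    exact Real.rpow_def_of_pos (by positivity) _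
  rw [heq]
  have h1 : Tendsto (fun n : ℕ => Real.log (C*((n:ℝ)+1)) * (1/(n:ℝ))) atTop (nhds 0) := by
    have he : ∀ n : ℕ, Real.log (C*((n:ℝ)+1)) * (1/(n:ℝ))
        = Real.log C / (n:ℝ) + Real.log ((n:ℝ)+1) / (n:ℝ) := by
      intro n
      rw [Real.log_mul hC.ne' (by positivity), mul_one_div, add_div]
    simp only [he]
    simpa using (tendsto_const_div_atTop_nhds_zero_nat (Real.log C)).add aux_log_tendsto'
  simpa [Function.comp_def] using (Real.continuous_exp.tendsto 0).comp h1

private lemma aux_tendsto_of_bound' (s : ℕ → ℝ) (hs0 : ∀ n, 0 ≤ s n)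
    (H : ∀ δ : ℝ, 0 < δ → ∃ C : ℝ, 0 < C ∧ ∀ n, s n ≤ C * ((n:ℝ)+1) * δ ^ n) :
    Filter.Tendsto (fun n => s n ^ (1/(n:ℝ))) Filter.atTop (nhds 0) := by
  rw [Metric.tendsto_atTop]
  intro ε hε
  obtain ⟨C, hC, hCb⟩ := H (ε/2) (by linarith)
  have hlim : Tendsto (fun n : ℕ => (C*((n:ℝ)+1))^(1/(n:ℝ)) * (ε/2)) atTop (nhds (ε/2)) := by
    simpa using (aux_rpow_tendsto_one' hC).mul_const (ε/2)
  have hev : ∀ᶠ n : ℕ in atTop, (C*((n:ℝ)+1))^(1/(n:ℝ)) * (ε/2) < ε :=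
    hlim.eventually (gt_mem_nhds (by linarith))
  obtain ⟨N, hN⟩ := eventually_atTop.1 (hev.and (eventually_ge_atTop 1))
  refine ⟨N, fun n hn => ?_⟩
  obtain ⟨h1, h2⟩ := hN n hn
  have hn0 : (n:ℝ) ≠ 0 := by
    have : (1:ℕ) ≤ n := h2
    positivity
  rw [Real.dist_eq, sub_zero, abs_of_nonneg (Real.rpow_nonneg (hs0 n) _)]
  calc s n ^ (1/(n:ℝ)) ≤ (C*((n:ℝ)+1)*(ε/2)^n) ^ (1/(n:ℝ)) :=
        Real.rpow_le_rpow (hs0 n) (hCb n) (by positivity)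
    _ = (C*((n:ℝ)+1))^(1/(n:ℝ)) * (ε/2) := by
        rw [Real.mul_rpow (by positivity) (by positivity), ← Real.rpow_natCast (ε/2) n,
          ← Real.rpow_mul (by linarith), mul_one_div, div_self hn0, Real.rpow_one]
    _ < ε := h1

private lemma aux_geom_bound' (u : ℕ → ℝ) (hu0 : ∀ n, 0 ≤ u n)
    (hu : Filter.Tendsto (fun n => u n ^ (1/(n:ℝ))) Filter.atTop (nhds 0)) {δ : ℝ} (hδ : 0 < δ) :
    ∃ C : ℝ, 0 < C ∧ ∀ n, u n ≤ C * δ ^ n := by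
  obtain ⟨N, hN⟩ := eventually_atTop.1 (hu.eventually (gt_mem_nhds hδ))
  set M := max N 1 with hM
  have hsum0 : (0:ℝ) ≤ ∑ m ∈ Finset.range (M+1), u m / δ ^ m :=
    Finset.sum_nonneg fun m _ => div_nonneg (hu0 m) (pow_pos hδ m).le
  refine ⟨(∑ m ∈ Finset.range (M+1), u m / δ ^ m) + 1, by linarith, fun n => ?_⟩
  by_cases hn : n ≤ M
  · have h1 : u n / δ ^ n ≤ ∑ m ∈ Finset.range (M+1), u m / δ^m :=
      Finset.single_le_sum (f := fun m => u m / δ ^ m)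
        (fun m _ => div_nonneg (hu0 m) (pow_pos hδ m).le) (Finset.mem_range.2 (by omega))
    rw [div_le_iff₀ (pow_pos hδ n)] at h1
    nlinarith [pow_pos hδ n]
  · push_neg at hn
    have hn1 : n ≠ 0 := by omega
    have hlt : u n ^ (1/(n:ℝ)) < δ := hN n (by omega)
    have hun : u n < δ ^ n := by
      have h0 : u n = (u n ^ (1/(n:ℝ))) ^ n := by
        rw [← Real.rpow_natCast (u n ^ (1/(n:ℝ))) n, ← Real.rpow_mul (hu0 n),
          one_div_mul_cancel (by exact_mod_cast hn1), Real.rpow_one]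
      rw [h0]
      exact pow_lt_pow_left₀ hlt (Real.rpow_nonneg (hu0 n) _) hn1
    nlinarith [pow_pos hδ n]

private lemma aux_pow_add' {R : Type*} [Ring R] {X Y : R} (h : Y * X = 0) (n : ℕ) :
    (X + Y) ^ n = ∑ i ∈ Finset.range (n+1), X ^ i * Y ^ (n - i) := by
  induction n with
  | zero => simp
  | succ n ih =>
    have hYX : ∀ k : ℕ, k ≠ 0 → Y ^ k * X = 0 := by
      intro k hk
      obtain ⟨m, rfl⟩ : ∃ m, k = m + 1 := ⟨k-1, by omega⟩
      rw [pow_succ, mul_assoc, h, mul_zero]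
    rw [pow_succ, ih, Finset.sum_mul]
    have h1 : ∀ i ∈ Finset.range (n+1),
        X^i * Y^(n-i) * (X + Y) = X^i * Y^(n-i) * X + X^i * Y^(n+1-i) := by
      intro i hi
      rw [Finset.mem_range] at hi
      rw [mul_add]
      congr 1
      rw [mul_assoc, ← pow_succ]
      congr 2
      omega
    have h3 : ∑ i ∈ Finset.range (n+1), X^i*Y^(n-i)*X = X^(n+1) := by
      rw [Finset.sum_range_succ]
      rw [Finset.sum_eq_zero, zero_add, Nat.sub_self, pow_zero, mul_one, ← pow_succ]
      intro i hi
      rw [Finset.mem_range] at hi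
      rw [mul_assoc, hYX (n-i) (by omega), mul_zero]
    rw [Finset.sum_congr rfl h1, Finset.sum_add_distrib, h3,
      Finset.sum_range_succ (fun i => X^i * Y^(n+1-i)) (n+1), Nat.sub_self, pow_zero,
      mul_one, add_comm]

/-- Corollary 3.2. -/
theorem isWCoreEPInv_add_wQuasinilpotent (w a b x : A)
    (ha : IsWCoreEPInv w a x) (hb : IsWQuasinilpotent w b) (hba : b * w * a = 0) :
    IsWCoreEPInv w (a + b) x := by
  obtain ⟨h1, h2, h3⟩ := ha
  have hbwx : b * w * x = 0 := by
    conv_lhs => rw [← h1]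
    rw [← mul_assoc, hba, zero_mul]
  refine ⟨?_, ?_, ?_⟩
  · have hb2 : b * (w*x)^2 = 0 := by
      rw [pow_two, ← mul_assoc b (w*x) (w*x), ← mul_assoc b w x, hbwx, zero_mul]
    rw [add_mul, h1, hb2, add_zero]
  · have h0 : w*b*w*x = 0 := by
      rw [mul_assoc w b w, mul_assoc w (b*w) x, hbwx, mul_zero]
    have heq : w*(a+b)*w*x = w*a*w*x := by
      rw [mul_add w a b, add_mul, add_mul, h0, add_zero]
    rw [heq]
    exact h2
  · have hBA : (b*w) * (a*w) = 0 := by rw [← mul_assoc, hba, zero_mul]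
    have hdecomp : ∀ n : ℕ, ((a+b)*w)^n - x*w*((a+b)*w)^(n+1)
        = (∑ i ∈ Finset.range (n+1), ((a*w)^i - x*w*(a*w)^(i+1)) * (b*w)^(n-i))
          - x*w*(b*w)^(n+1) := by
      intro n
      have hab : (a+b)*w = a*w + b*w := add_mul a b w
      rw [hab, aux_pow_add' hBA n, aux_pow_add' hBA (n+1), Finset.mul_sum,
        Finset.sum_range_succ' (fun i => x*w*((a*w)^i*(b*w)^(n+1-i))) (n+1)]
      simp only [sub_mul, Finset.sum_sub_distrib, mul_assoc, pow_zero, one_mul,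
        Nat.succ_sub_succ_eq_sub, Nat.sub_zero]
      abel
    apply aux_tendsto_of_bound' _ (fun n => norm_nonneg _)
    intro δ hδ
    obtain ⟨Cu, hCu, hCub⟩ := aux_geom_bound'
      (fun i => ‖(a*w)^i - x*w*(a*w)^(i+1)‖) (fun i => norm_nonneg _) h3 hδ
    obtain ⟨Cv, hCv, hCvb⟩ := aux_geom_bound'
      (fun k => ‖(b*w)^k‖) (fun k => norm_nonneg _) hb hδ
    refine ⟨Cu*Cv + ‖x*w‖*Cv*δ + 1, by positivity, fun n => ?_⟩
    rw [hdecomp n]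
    have hbnd1 : ‖∑ i ∈ Finset.range (n+1), ((a*w)^i - x*w*(a*w)^(i+1)) * (b*w)^(n-i)‖
        ≤ (Cu*Cv) * ((n:ℝ)+1) * δ^n := by
      calc ‖∑ i ∈ Finset.range (n+1), ((a*w)^i - x*w*(a*w)^(i+1)) * (b*w)^(n-i)‖
          ≤ ∑ i ∈ Finset.range (n+1), ‖((a*w)^i - x*w*(a*w)^(i+1)) * (b*w)^(n-i)‖ :=
            norm_sum_le _ _
        _ ≤ ∑ i ∈ Finset.range (n+1), (Cu*δ^i)*(Cv*δ^(n-i)) := by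
            apply Finset.sum_le_sum
            intro i _
            exact le_trans (norm_mul_le _ _)
              (mul_le_mul (hCub i) (hCvb (n-i)) (norm_nonneg _) (by positivity))
        _ = ∑ i ∈ Finset.range (n+1), (Cu*Cv)*δ^n := by
            apply Finset.sum_congr rfl
            intro i hi
            rw [Finset.mem_range] at hi
            rw [mul_mul_mul_comm, ← pow_add]
            congr 2
            omega
        _ = (Cu*Cv) * ((n:ℝ)+1) * δ^n := by
            rw [Finset.sum_const, Finset.card_range, nsmul_eq_mul]
            push_cast
            ring
    have hbnd2 : ‖x*w*(b*w)^(n+1)‖ ≤ ‖x*w‖*Cv*δ*δ^n := by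
      calc ‖x*w*(b*w)^(n+1)‖ ≤ ‖x*w‖*‖(b*w)^(n+1)‖ := norm_mul_le _ _
        _ ≤ ‖x*w‖*(Cv*δ^(n+1)) := mul_le_mul_of_nonneg_left (hCvb (n+1)) (norm_nonneg _)
        _ = ‖x*w‖*Cv*δ*δ^n := by rw [pow_succ]; ring
    calc ‖(∑ i ∈ Finset.range (n+1), ((a*w)^i - x*w*(a*w)^(i+1)) * (b*w)^(n-i))
          - x*w*(b*w)^(n+1)‖
        ≤ ‖∑ i ∈ Finset.range (n+1), ((a*w)^i - x*w*(a*w)^(i+1)) * (b*w)^(n-i)‖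
          + ‖x*w*(b*w)^(n+1)‖ := norm_sub_le _ _
      _ ≤ (Cu*Cv) * ((n:ℝ)+1) * δ^n + ‖x*w‖*Cv*δ*δ^n := add_le_add hbnd1 hbnd2
      _ ≤ (Cu*Cv + ‖x*w‖*Cv*δ + 1) * ((n:ℝ)+1) * δ^n := by
          have hpow : (0:ℝ) < δ^n := pow_pos hδ n
          have hnn : (0:ℝ) ≤ (n:ℝ) := Nat.cast_nonneg n
          have hxw : (0:ℝ) ≤ ‖x*w‖*Cv*δ := by positivity
          nlinarith [mul_nonneg (mul_nonneg hxw hnn) hpow.le,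
            mul_pos (show (0:ℝ) < (n:ℝ)+1 by linarith) hpow]
end

section
/- Let a ∈ 𝒜. The following are equivalent: (1) a has a generalized core-EP inverse; (2) there exist z, y ∈ 𝒜 such that a = z + y, z*y = 0, yz = 0, z has a core inverse, and y is quasinilpotent; (3) there exist z, y ∈ 𝒜 such that a = z + y, yz = 0, z has a core inverse, and y is quasinilpotent. In this case a^{⊛d} = z^{⊛}. -/
open Filter

section Helpers
open Filter

private lemma ev_le' (b : ℕ → ℝ) (hb : ∀ n, 0 ≤ b n)
    (h : Tendsto (fun n : ℕ => b n ^ (1 / (n : ℝ))) atTop (nhds 0))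
    (ε : ℝ) (hε : 0 < ε) : ∀ᶠ n in atTop, b n ≤ ε ^ n := by
  have h1 : ∀ᶠ n : ℕ in atTop, b n ^ (1 / (n : ℝ)) < ε :=
    h.eventually (gt_mem_nhds hε)
  filter_upwards [h1, eventually_ge_atTop 1] with n hn hn1
  have hn0 : (n : ℝ) ≠ 0 := by positivity
  have : (b n ^ (1 / (n : ℝ))) ^ n ≤ ε ^ n := by
    apply pow_le_pow_left₀ (Real.rpow_nonneg (hb n) _) hn.le
  calc b n = (b n ^ (1 / (n : ℝ))) ^ n := by
        rw [← Real.rpow_natCast (b n ^ (1 / (n:ℝ))), ← Real.rpow_mul (hb n),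
          one_div_mul_cancel hn0, Real.rpow_one]
    _ ≤ ε ^ n := this

private lemma tendsto_of_ev' (c : ℕ → ℝ) (hc : ∀ n, 0 ≤ c n)
    (h : ∀ ε > (0:ℝ), ∀ᶠ n in atTop, c n ≤ ε ^ n) :
    Tendsto (fun n : ℕ => c n ^ (1 / (n : ℝ))) atTop (nhds 0) := by
  rw [Metric.tendsto_atTop]
  intro ε hε
  have h2 := h (ε/2) (by linarith)
  rw [eventually_atTop] at h2
  obtain ⟨N, hN⟩ := h2
  refine ⟨max N 1, fun n hn => ?_⟩
  have hn1 : 1 ≤ n := le_trans (le_max_right N 1) hn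
  have hnN : N ≤ n := le_trans (le_max_left N 1) hn
  have hn0 : (n : ℝ) ≠ 0 := by positivity
  have hle : c n ^ (1 / (n:ℝ)) ≤ ε / 2 := by
    calc c n ^ (1 / (n:ℝ)) ≤ ((ε/2) ^ n) ^ (1 / (n:ℝ)) :=
          Real.rpow_le_rpow (hc n) (hN n hnN) (by positivity)
      _ = ε / 2 := by
          rw [← Real.rpow_natCast (ε/2), ← Real.rpow_mul (by linarith),
            mul_one_div_cancel hn0, Real.rpow_one]
  have hpos : 0 ≤ c n ^ (1 / (n:ℝ)) := Real.rpow_nonneg (hc n) _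
  rw [Real.dist_eq, abs_sub_comm, abs_of_nonpos (by linarith)]
  simp only [neg_sub, sub_zero] at *
  linarith

private lemma tendsto_of_bound' (b c : ℕ → ℝ) (hb : ∀ n, 0 ≤ b n) (hc : ∀ n, 0 ≤ c n)
    (h : Tendsto (fun n : ℕ => b n ^ (1 / (n : ℝ))) atTop (nhds 0))
    (C : ℝ) (hC : 0 ≤ C) (k : ℕ) (hbc : ∀ n, c (n + k) ≤ C * b n) :
    Tendsto (fun n : ℕ => c n ^ (1 / (n : ℝ))) atTop (nhds 0) := by
  apply tendsto_of_ev' c hc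
  intro ε hε
  have hev := ev_le' b hb h (ε/2) (by linarith)
  have h2 : Tendsto (fun n : ℕ => (2:ℝ) ^ n) atTop atTop :=
    tendsto_pow_atTop_atTop_of_one_lt (by norm_num)
  have hev2 : ∀ᶠ n : ℕ in atTop, C ≤ ε ^ k * 2 ^ n := by
    filter_upwards [h2.eventually_ge_atTop (C / (ε ^ k))] with n hn
    rw [div_le_iff₀ (by positivity : (0:ℝ) < ε ^ k)] at hn
    calc C ≤ 2 ^ n * ε ^ k := hn
      _ = ε ^ k * 2 ^ n := by ring
  rw [eventually_atTop] at hev hev2 ⊢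
  obtain ⟨N1, h1⟩ := hev; obtain ⟨N2, h2'⟩ := hev2
  refine ⟨N1 + N2 + k, fun m hm => ?_⟩
  have hmk : m = (m - k) + k := by omega
  rw [hmk]
  set n := m - k
  calc c (n + k) ≤ C * b n := hbc n
    _ ≤ (ε ^ k * 2 ^ n) * (ε/2) ^ n :=
        mul_le_mul (h2' n (by omega)) (h1 n (by omega)) (hb n) (by positivity)
    _ = ε ^ (n + k) := by rw [pow_add, div_pow]; field_simp

private lemma eq_zero_of_bound' {R : Type*} [NormedRing R] (b : ℕ → ℝ) (hb : ∀ n, 0 ≤ b n)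
    (h : Tendsto (fun n : ℕ => b n ^ (1 / (n : ℝ))) atTop (nhds 0))
    (v : R) (C M : ℝ) (hM : 0 ≤ M) (hC : 0 ≤ C)
    (hv : ∀ᶠ n in atTop, ‖v‖ ≤ C * b n * M ^ n) : v = 0 := by
  have hM0 : (0:ℝ) < M + 1 := by linarith
  have hev := ev_le' b hb h (1 / (2 * (M+1))) (by positivity)
  have hbase : (1 / (2 * (M+1))) * (M+1) = 1/2 := by field_simp
  have key : ∀ᶠ n : ℕ in atTop, ‖v‖ ≤ C * (1/2) ^ n := by
    filter_upwards [hev, hv] with n hn hvn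
    calc ‖v‖ ≤ C * b n * M ^ n := hvn
      _ ≤ C * ((1 / (2 * (M+1))) ^ n * (M+1) ^ n) := by
          rw [← mul_assoc]
          apply mul_le_mul (mul_le_mul le_rfl hn (hb n) hC)
            (pow_le_pow_left₀ hM (by linarith) n) (by positivity)
          positivity
      _ = C * (1/2) ^ n := by rw [← mul_pow, hbase]
  have hlim : Tendsto (fun n : ℕ => C * (1/2 : ℝ) ^ n) atTop (nhds 0) := by
    have := tendsto_pow_atTop_nhds_zero_of_lt_one (by norm_num : (0:ℝ) ≤ 1/2) (by norm_num)
    simpa using this.const_mul C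
  have : ‖v‖ ≤ 0 := ge_of_tendsto hlim key
  simpa using le_antisymm this (norm_nonneg v)

private lemma main_lemma' {R : Type*} [NormedRing R] [StarRing R]
    (a z y u : R) (ha : a = z + y) (hyz : y * z = 0)
    (hu : IsCoreInv z u) (hy : IsQuasinilpotent y) : IsCoreEPInv a u := by
  obtain ⟨h1, h2, h3⟩ := hu
  have h1' : z * (u * u) = u := by rw [sq] at h1; exact h1
  have h3' : u * (z * z) = z := by rw [sq] at h3; exact h3
  have hyu : y * u = 0 := by
    have e : y * u = y * (z * (u * u)) := by rw [h1']
    rw [e, ← mul_assoc, hyz, zero_mul]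
  have hau : a * u = z * u := by rw [ha, add_mul, hyu, add_zero]
  have huaz : (1 - u * a) * z = 0 := by
    calc (1 - u * a) * z = z - (u * (z * z) + u * (y * z)) := by rw [ha]; noncomm_ring
      _ = 0 := by rw [h3', hyz, mul_zero, add_zero, sub_self]
  have hynz : ∀ n : ℕ, (1 - u * a) * y ^ n * z = 0 := by
    intro n
    cases n with
    | zero => simpa using huaz
    | succ n =>
      have e : (1 - u * a) * y ^ (n+1) * z = (1 - u * a) * y ^ n * (y * z) := by
        rw [pow_succ]; noncomm_ring
      rw [e, hyz, mul_zero]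
  have key : ∀ n : ℕ, a ^ n - u * a ^ (n + 1) = (1 - u * a) * y ^ n := by
    intro n
    induction n with
    | zero => simp [sub_mul]
    | succ n ih =>
      have step : a ^ (n+1) - u * a ^ (n+1+1) = (a ^ n - u * a ^ (n+1)) * a := by
        rw [pow_succ, pow_succ]; noncomm_ring
      rw [step, ih, ha]
      calc (1 - u * (z + y)) * y ^ n * (z + y)
          = (1 - u * (z + y)) * y ^ n * z + (1 - u * (z + y)) * y ^ (n+1) := by
            rw [pow_succ]; noncomm_ring
        _ = (1 - u * (z + y)) * y ^ (n+1) := by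
            rw [← ha, hynz, zero_add, ha]
  refine ⟨?_, ?_, ?_⟩
  · calc a * u ^ 2 = z * u ^ 2 + (y * u) * u := by rw [ha]; noncomm_ring
      _ = u := by rw [h1, hyu, zero_mul, add_zero]
  · rw [hau, h2]
  · apply tendsto_of_bound' (fun n => ‖y ^ n‖) _ (fun n => norm_nonneg _)
      (fun n => norm_nonneg _) hy ‖(1 : R) - u * a‖ (norm_nonneg _) 0
    intro n
    simp only [add_zero]
    rw [key n]
    exact norm_mul_le _ _

private lemma decomp_lemma' {R : Type*} [NormedRing R] [StarRing R]
    (a x : R) (hx : IsCoreEPInv a x) :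
    a = (a*x*a) + (a - a*x*a) ∧ star (a*x*a) * (a - a*x*a) = 0 ∧
      (a - a*x*a) * (a*x*a) = 0 ∧ IsCoreInv (a*x*a) x ∧
      IsQuasinilpotent (a - a*x*a) := by
  obtain ⟨hx1, hx2, hx3⟩ := hx
  set b : ℕ → ℝ := fun n => ‖a ^ n - x * a ^ (n+1)‖ with hbdef
  have hb : ∀ n, 0 ≤ b n := fun n => norm_nonneg _
  have hxn : ∀ n : ℕ, a ^ n * x ^ (n+1) = x := by
    intro n
    induction n with
    | zero => simp
    | succ n ih =>
      have e2 : x ^ (n+1+1) = x ^ 2 * x ^ n := by rw [← pow_add]; congr 1; omega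
      calc a ^ (n+1) * x ^ (n+1+1) = a ^ n * (a * x ^ 2) * x ^ n := by
            rw [pow_succ, e2]; noncomm_ring
        _ = a ^ n * x ^ (n+1) := by rw [hx1, mul_assoc, ← pow_succ']
        _ = x := ih
  have haxn : ∀ n : ℕ, a ^ (n+1) * x ^ (n+1) = a * x := by
    intro n
    rw [pow_succ' a n, mul_assoc, hxn n]
  have iden1 : ∀ n : ℕ, x * a * x - x = -((a ^ n - x * a ^ (n+1)) * x ^ (n+1)) := by
    intro n
    have c1 : x * a * x = x * a ^ (n+1) * x ^ (n+1) := by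
      rw [mul_assoc, ← haxn n, mul_assoc]
    have c2 : x * a ^ (n+1) * x ^ (n+1)
        = a ^ n * x ^ (n+1) - (a ^ n - x * a ^ (n+1)) * x ^ (n+1) := by noncomm_ring
    rw [c1, c2, hxn n]; noncomm_ring
  have hxax : x * a * x = x := by
    have hz : x * a * x - x = 0 := by
      apply eq_zero_of_bound' b hb hx3 _ ‖x‖ ‖x‖ (norm_nonneg x) (norm_nonneg x)
      apply Filter.Eventually.of_forall
      intro n
      rw [iden1 n, norm_neg]
      calc ‖(a ^ n - x * a ^ (n+1)) * x ^ (n+1)‖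
          ≤ b n * ‖x ^ (n+1)‖ := norm_mul_le _ _
        _ ≤ b n * ‖x‖ ^ (n+1) := by
            apply mul_le_mul le_rfl (norm_pow_le' x n.succ_pos) (norm_nonneg _) (hb n)
        _ = ‖x‖ * b n * ‖x‖ ^ n := by rw [pow_succ']; ring
    exact sub_eq_zero.mp hz
  have iden2 : ∀ n : ℕ, x * a * a * x - a * x
      = -((a ^ (n+1) - x * a ^ (n+2)) * x ^ (n+1)) := by
    intro n
    have c1 : x * a * a * x = x * a ^ (n+2) * x ^ (n+1) := by
      have : x * a * a * x = x * a * (a ^ (n+1) * x ^ (n+1)) := by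
        rw [haxn n]; noncomm_ring
      rw [this, show x * a * (a ^ (n+1) * x ^ (n+1)) = x * (a * a ^ (n+1)) * x ^ (n+1) by
        noncomm_ring, ← pow_succ']
    have c2 : x * a ^ (n+2) * x ^ (n+1)
        = a ^ (n+1) * x ^ (n+1) - (a ^ (n+1) - x * a ^ (n+2)) * x ^ (n+1) := by
      noncomm_ring
    rw [c1, c2, haxn n]; noncomm_ring
  have hxaax : x * a * a * x = a * x := by
    have hz : x * a * a * x - a * x = 0 := by
      apply eq_zero_of_bound' b hb hx3 _ 1 ‖x‖ (norm_nonneg x) zero_le_one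
      filter_upwards [eventually_ge_atTop 1] with n hn
      obtain ⟨m, rfl⟩ : ∃ m, n = m + 1 := ⟨n - 1, by omega⟩
      rw [iden2 m, norm_neg, one_mul]
      calc ‖(a ^ (m+1) - x * a ^ (m+2)) * x ^ (m+1)‖
          ≤ b (m+1) * ‖x ^ (m+1)‖ := norm_mul_le _ _
        _ ≤ b (m+1) * ‖x‖ ^ (m+1) := by
            apply mul_le_mul le_rfl (norm_pow_le' x m.succ_pos) (norm_nonneg _) (hb _)
    exact sub_eq_zero.mp hz
  have hxy0 : (a * x) * (a - a*x*a) = 0 := by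
    have e : (a * x) * (a - a*x*a) = a*x*a - a * (x*a*x) * a := by noncomm_ring
    rw [e, hxax, sub_self]
  have h0ax : (1 - x*a) * (a*x) = 0 := by
    have e : (1 - x*a) * (a*x) = a*x - x*a*a*x := by noncomm_ring
    rw [e, hxaax, sub_self]
  have hB : (1 - x*a) * a * (1 - x*a) = (1 - x*a) * a := by
    have e : (1 - x*a) * a * (1 - x*a)
        = (1 - x*a) * a - ((1 - x*a) * (a*x)) * a := by noncomm_ring
    rw [e, h0ax, zero_mul, sub_zero]
  have hyxa : (a - a*x*a) * (x*a) = 0 := by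
    have e : (a - a*x*a) * (x*a) = a*x*a - a * (x*a*x) * a := by noncomm_ring
    rw [e, hxax, sub_self]
  refine ⟨by noncomm_ring, ?_, ?_, ⟨?_, ?_, ?_⟩, ?_⟩
  · rw [star_mul, hx2, mul_assoc, hxy0, mul_zero]
  · have e : (a - a*x*a) * (a*x*a) = a*(a*x)*a - a*(x*a*a*x)*a := by noncomm_ring
    rw [e, hxaax, sub_self]
  · have e : (a*x*a) * x^2 = a * (x*a*x) * x := by noncomm_ring
    rw [e, hxax]
    have e2 : a * x * x = a * x^2 := by noncomm_ring
    rw [e2, hx1]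
  · have e : (a*x*a) * x = a * (x*a*x) := by noncomm_ring
    rw [e, hxax, hx2]
  · have e : x * (a*x*a)^2 = (x*a*x) * (a*a*x*a) := by noncomm_ring
    rw [e, hxax]
    have e2 : x * (a*a*x*a) = (x*a*a*x) * a := by noncomm_ring
    rw [e2, hxaax]
  · have hyn : ∀ n : ℕ, (a - a*x*a)^(n+1) = a * ((1 - x*a) * a^n) * (1 - x*a) := by
      intro n
      induction n with
      | zero =>
        have e : a * ((1 - x*a) * a^0) * (1 - x*a)
            = (a - a*x*a) - (a - a*x*a) * (x*a) := by noncomm_ring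
        rw [pow_one, e, hyxa, sub_zero]
      | succ n ih =>
        rw [pow_succ', ih]
        have e : (a - a*x*a) * (a * ((1 - x*a) * a^n) * (1 - x*a))
            = a * ((1 - x*a) * a * (1 - x*a)) * a^n * (1 - x*a) := by noncomm_ring
        rw [e, hB]
        have e2 : a * ((1 - x*a) * a) * a^n = a * ((1 - x*a) * (a * a^n)) := by
          noncomm_ring
        rw [e2, ← pow_succ']
    have hen : ∀ n : ℕ, (1 - x*a) * a^n = a^n - x*a^(n+1) := by
      intro n
      rw [sub_mul, one_mul, mul_assoc, ← pow_succ']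
    apply tendsto_of_bound' b _ hb (fun n => norm_nonneg _) hx3
      (‖a‖ * ‖(1:R) - x*a‖) (by positivity) 1
    intro n
    rw [hyn n, hen n]
    calc ‖a * (a^n - x*a^(n+1)) * (1 - x*a)‖
        ≤ ‖a * (a^n - x*a^(n+1))‖ * ‖(1:R) - x*a‖ := norm_mul_le _ _
      _ ≤ ‖a‖ * b n * ‖(1:R) - x*a‖ := by
          apply mul_le_mul (norm_mul_le _ _) le_rfl (norm_nonneg _) (by positivity)
      _ = ‖a‖ * ‖(1:R) - x*a‖ * b n := by ring

end Helpers

variable {A : Type*} [NormedRing A] [NormedAlgebra ℂ A] [StarRing A] [StarModule ℂ A]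
  [CompleteSpace A]

/-- Corollary 3.3. -/
theorem isCoreEPInv_exists_tfae (a : A) :
    (List.TFAE
      [ ∃ x, IsCoreEPInv a x,
        ∃ z y : A, a = z + y ∧ star z * y = 0 ∧ y * z = 0 ∧
          (∃ u, IsCoreInv z u) ∧ IsQuasinilpotent y,
        ∃ z y : A, a = z + y ∧ y * z = 0 ∧
          (∃ u, IsCoreInv z u) ∧ IsQuasinilpotent y ]) ∧
    (∀ z y u : A, a = z + y → y * z = 0 → IsCoreInv z u →
      IsQuasinilpotent y → IsCoreEPInv a u) := by
  constructor
  · tfae_have 1 → 2 := by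
      rintro ⟨x, hx⟩
      obtain ⟨h1, h2, h3, h4, h5⟩ := decomp_lemma' a x hx
      exact ⟨a*x*a, a - a*x*a, h1, h2, h3, ⟨x, h4⟩, h5⟩
    tfae_have 2 → 3 := by
      rintro ⟨z, y, h1, _, h3, h4, h5⟩
      exact ⟨z, y, h1, h3, h4, h5⟩
    tfae_have 3 → 1 := by
      rintro ⟨z, y, h1, h2, ⟨u, hu⟩, h5⟩
      exact ⟨u, main_lemma' a z y u h1 h2 hu h5⟩
    tfae_finish
  · intro z y u h1 h2 h3 h4
    exact main_lemma' a z y u h1 h2 h3 h4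
end

section
/- Let a ∈ 𝒜. The following are equivalent: (1) a has a pseudo core inverse; (2) there exist z, y ∈ 𝒜 such that a = z + y, z*y = 0, yz = 0, z has a core inverse, and y is nilpotent; (3) there exist z, y ∈ 𝒜 such that a = z + y, yz = 0, z has a core inverse, and y is nilpotent. In this case the pseudo core inverse of a equals z^{⊛}. -/
open Filter

variable {A : Type*} [NormedRing A] [NormedAlgebra ℂ A] [StarRing A] [StarModule ℂ A]
  [CompleteSpace A]

section Aux
set_option linter.unusedSectionVars false
variable {R : Type*} [Ring R] [StarRing R]

lemma aux_paz {a z y : R} (ha : a = z + y) (hyz : y * z = 0) :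
    ∀ m : ℕ, a ^ m * z = z ^ (m + 1) := by
  intro m
  induction m with
  | zero => simp
  | succ n ih =>
    have haz : a * z = z * z := by rw [ha, add_mul, hyz, add_zero]
    calc a ^ (n + 1) * z = a ^ n * (a * z) := by rw [pow_succ, mul_assoc]
      _ = a ^ n * z * z := by rw [haz, mul_assoc]
      _ = z ^ (n + 1) * z := by rw [ih]
      _ = z ^ (n + 1 + 1) := by rw [← pow_succ]

lemma aux_l2 {a z y : R} (ha : a = z + y) (hyz : y * z = 0) (m : ℕ) :
    a ^ (m + 1) = z ^ (m + 1) + a ^ m * y := by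
  calc a ^ (m + 1) = a ^ m * (z + y) := by rw [pow_succ, ← ha]
    _ = a ^ m * z + a ^ m * y := by rw [mul_add]
    _ = z ^ (m + 1) + a ^ m * y := by rw [aux_paz ha hyz]

lemma aux_main {a z y u : R} (ha : a = z + y) (hyz : y * z = 0)
    (hu : IsCoreInv z u) (hy : IsNilpotent y) : IsPseudoCoreInv a u := by
  obtain ⟨hu1, hu2, hu3⟩ := hu
  obtain ⟨n, hn⟩ := hy
  have hyu : y * u = 0 := by
    rw [← hu1, ← mul_assoc, hyz, zero_mul]
  have hau : a * u = z * u := by rw [ha, add_mul, hyu, add_zero]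
  have hauu : a * u ^ 2 = u := by
    rw [ha, add_mul, hu1, sq, ← mul_assoc, hyu, zero_mul, add_zero]
  have hyzp : ∀ j : ℕ, y ^ (j + 1) * z = 0 := by
    intro j
    rw [pow_succ, mul_assoc, hyz, mul_zero]
  have l3 : ∀ m : ℕ, u * a ^ (m + 2) =
      a ^ (m + 1) - y ^ (m + 1) + u * (z * y ^ (m + 1)) + u * y ^ (m + 2) := by
    intro m
    induction m with
    | zero =>
      have huzz : u * (z * z) = z := by rw [← sq, hu3]
      have h2 : a ^ 2 = z * z + (z * y + y * y) := by
        rw [sq, ha, add_mul, mul_add, mul_add, hyz]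
        abel
      show u * a ^ 2 = a ^ 1 - y ^ 1 + u * (z * y ^ 1) + u * y ^ 2
      rw [h2, mul_add, mul_add, huzz, pow_one, pow_one, sq, ha]
      abel
    | succ m ih =>
      calc u * a ^ (m + 3) = u * a ^ (m + 2) * a := by rw [pow_succ, mul_assoc]
        _ = (a ^ (m + 1) - y ^ (m + 1) + u * (z * y ^ (m + 1)) + u * y ^ (m + 2)) * (z + y) := by
            rw [ih, ha]
        _ = (a ^ (m + 1) * z + a ^ (m + 1) * y) - y ^ (m + 1) * z - y ^ (m + 2)
            + (u * (z * (y ^ (m + 1) * z)) + u * (z * y ^ (m + 2)))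
            + (u * (y ^ (m + 2) * z) + u * y ^ (m + 3)) := by
            noncomm_ring
        _ = a ^ (m + 2) - y ^ (m + 2) + u * (z * y ^ (m + 2)) + u * y ^ (m + 3) := by
            rw [hyzp, hyzp, aux_paz ha hyz, ← aux_l2 ha hyz]
            simp
  refine ⟨hauu, by rw [hau]; exact hu2, n + 1, Nat.succ_pos n, ?_⟩
  have hn1 : y ^ (n + 1) = 0 := by rw [pow_succ, hn, zero_mul]
  have hn2 : y ^ (n + 2) = 0 := by rw [pow_succ, hn1, zero_mul]
  rw [l3 n, hn1, hn2]
  simp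

end Aux

section Aux2
set_option linter.unusedSectionVars false
variable {R : Type*} [Ring R] [StarRing R]

lemma aux_decomp {a x : R} (hx : IsPseudoCoreInv a x) :
    ∃ z y : R, a = z + y ∧ star z * y = 0 ∧ y * z = 0 ∧
      (∃ u, IsCoreInv z u) ∧ IsNilpotent y := by
  obtain ⟨hx1, hx2, k, hk, hxk⟩ := hx
  have hm : ∀ m : ℕ, a ^ m * x ^ (m + 1) = x := by
    intro m
    induction m with
    | zero => simp
    | succ m ih =>
      have hax2 : a * x ^ (m + 2) = x ^ (m + 1) := by
        calc a * x ^ (m + 2) = a * x ^ 2 * x ^ m := by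
              rw [show m + 2 = 2 + m by omega, pow_add, mul_assoc]
          _ = x * x ^ m := by rw [hx1]
          _ = x ^ (m + 1) := by rw [← pow_succ']
      calc a ^ (m + 1) * x ^ (m + 2) = a ^ m * (a * x ^ (m + 2)) := by
            rw [pow_succ, mul_assoc]
        _ = a ^ m * x ^ (m + 1) := by rw [hax2]
        _ = x := ih
  have hxax : x * a * x = x := by
    calc x * a * x = x * a * (a ^ k * x ^ (k + 1)) := by rw [hm k]
      _ = x * (a * a ^ k) * x ^ (k + 1) := by noncomm_ring
      _ = x * a ^ (k + 1) * x ^ (k + 1) := by rw [← pow_succ']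
      _ = a ^ k * x ^ (k + 1) := by rw [hxk]
      _ = x := hm k
  have haxk : a * x = a ^ (k + 1) * x ^ (k + 1) := by
    calc a * x = a * (a ^ k * x ^ (k + 1)) := by rw [hm k]
      _ = a ^ (k + 1) * x ^ (k + 1) := by rw [← mul_assoc, ← pow_succ']
  have hxa2x : x * a ^ 2 * x = a * x := by
    calc x * a ^ 2 * x = x * a ^ 2 * (a ^ k * x ^ (k + 1)) := by rw [hm k]
      _ = x * (a ^ 2 * a ^ k) * x ^ (k + 1) := by noncomm_ring
      _ = x * a ^ (2 + k) * x ^ (k + 1) := by rw [← pow_add]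
      _ = x * a ^ (k + 1 + 1) * x ^ (k + 1) := by rw [show 2 + k = k + 1 + 1 by omega]
      _ = x * a ^ (k + 1) * (a * x ^ (k + 1)) := by rw [pow_succ]; noncomm_ring
      _ = a ^ k * (a * x ^ (k + 1)) := by rw [hxk]
      _ = a ^ (k + 1) * x ^ (k + 1) := by rw [← mul_assoc, ← pow_succ]
      _ = a * x := haxk.symm
  have haxax : a * x * (a * x) = a * x := by
    calc a * x * (a * x) = a * (x * a * x) := by noncomm_ring
      _ = a * x := by rw [hxax]
  have hnil : ∀ m : ℕ, (a - a * x * a) ^ (m + 1) = a ^ (m + 1) - a * x * a ^ (m + 1) := by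
    intro m
    induction m with
    | zero => rw [pow_one, pow_one]
    | succ m ih =>
      have key3 : a * x * a * (a * x * a ^ (m + 1)) = a * (a * x * a ^ (m + 1)) := by
        calc a * x * a * (a * x * a ^ (m + 1)) = a * (x * a ^ 2 * x) * a ^ (m + 1) := by
              noncomm_ring
          _ = a * (a * x) * a ^ (m + 1) := by rw [hxa2x]
          _ = a * (a * x * a ^ (m + 1)) := by noncomm_ring
      calc (a - a * x * a) ^ (m + 2)
          = (a - a * x * a) * (a ^ (m + 1) - a * x * a ^ (m + 1)) := by
            rw [pow_succ', ih]
        _ = a * a ^ (m + 1) - a * x * a * a ^ (m + 1)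
            - (a * (a * x * a ^ (m + 1)) - a * x * a * (a * x * a ^ (m + 1))) := by
            noncomm_ring
        _ = a ^ (m + 2) - a * x * a ^ (m + 2) := by
            rw [key3, sub_self, sub_zero, ← pow_succ', mul_assoc (a * x) a, ← pow_succ']
  refine ⟨a * x * a, a - a * x * a, by abel, ?_, ?_, ⟨x, ?_, ?_, ?_⟩, ⟨k + 1, ?_⟩⟩
  · have key : a * x * (a * x * a) = a * x * a := by
      calc a * x * (a * x * a) = a * x * (a * x) * a := by noncomm_ring
        _ = a * x * a := by rw [haxax]
    rw [star_mul, hx2, mul_assoc, mul_sub, key, sub_self, mul_zero]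
  · have key2 : a * x * a * (a * x * a) = a * (a * x * a) := by
      calc a * x * a * (a * x * a) = a * (x * a ^ 2 * x) * a := by noncomm_ring
        _ = a * (a * x) * a := by rw [hxa2x]
        _ = a * (a * x * a) := by noncomm_ring
    rw [sub_mul, key2, sub_self]
  · calc a * x * a * x ^ 2 = a * x * (a * x) * x := by noncomm_ring
      _ = a * x * x := by rw [haxax]
      _ = x := by rw [mul_assoc, ← sq, hx1]
  · have hzx : a * x * a * x = a * x := by
      calc a * x * a * x = a * (x * a * x) := by noncomm_ring
        _ = a * x := by rw [hxax]
    rw [hzx]; exact hx2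
  · calc x * (a * x * a) ^ 2 = x * a * x * (a ^ 2 * x * a) := by noncomm_ring
      _ = x * (a ^ 2 * x * a) := by rw [hxax]
      _ = x * a ^ 2 * x * a := by noncomm_ring
      _ = a * x * a := by rw [hxa2x]
  · rw [hnil k, mul_assoc, hxk, ← pow_succ', sub_self]

end Aux2

/-- Corollary 3.4. -/
theorem isPseudoCoreInv_exists_tfae (a : A) :
    (List.TFAE
      [ ∃ x, IsPseudoCoreInv a x,
        ∃ z y : A, a = z + y ∧ star z * y = 0 ∧ y * z = 0 ∧
          (∃ u, IsCoreInv z u) ∧ IsNilpotent y,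
        ∃ z y : A, a = z + y ∧ y * z = 0 ∧
          (∃ u, IsCoreInv z u) ∧ IsNilpotent y ]) ∧
    (∀ z y u : A, a = z + y → y * z = 0 → IsCoreInv z u →
      IsNilpotent y → IsPseudoCoreInv a u) := by
  
  constructor
  · tfae_have 1 → 2 := fun ⟨x, hx⟩ => aux_decomp hx
    tfae_have 2 → 3 := fun ⟨z, y, h1, _, h3, h4, h5⟩ => ⟨z, y, h1, h3, h4, h5⟩
    tfae_have 3 → 1 := fun ⟨z, y, h1, h3, ⟨u, hu⟩, h5⟩ => ⟨u, aux_main h1 h3 hu h5⟩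
    tfae_finish
  · intro z y u h1 h2 h3 h4
    exact aux_main h1 h2 h3 h4
end

section
/- Let a ∈ 𝒜 and let n be a positive integer. Then a has a generalized w-weighted core-EP inverse if and only if (1) a has a w-weighted g-Drazin inverse, and (2) there exists p ∈ 𝒜 with p² = p = p* such that pwa = pwap, pwa is quasinilpotent, and (wa)ⁿ + p is invertible in 𝒜. -/
open Filter

def DecSeq (r : ℕ → ℝ) : Prop := ∀ ε : ℝ, 0 < ε → ∀ᶠ n in atTop, r n ≤ ε ^ n

section DecLemmas

theorem decSeq_of_small {r : ℕ → ℝ} (ε₀ : ℝ) (hε₀ : 0 < ε₀)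
    (h : ∀ ε : ℝ, 0 < ε → ε ≤ ε₀ → ∀ᶠ n in atTop, r n ≤ ε ^ n) : DecSeq r := by
  intro ε hε
  rcases le_or_gt ε ε₀ with h' | h'
  · exact h ε hε h'
  · filter_upwards [h ε₀ hε₀ le_rfl] with n hn
    exact hn.trans (pow_le_pow_left₀ hε₀.le h'.le n)

theorem DecSeq.mono {r s : ℕ → ℝ} (hs : DecSeq s) (h : ∀ᶠ n in atTop, r n ≤ s n) :
    DecSeq r := fun ε hε => by
  filter_upwards [hs ε hε, h] with n h1 h2; exact h2.trans h1

theorem DecSeq.add {r s : ℕ → ℝ} (hr : DecSeq r) (hs : DecSeq s) :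
    DecSeq (fun n => r n + s n) := by
  intro ε hε
  filter_upwards [hr (ε/2) (by positivity), hs (ε/2) (by positivity),
    eventually_ge_atTop 1] with n h1 h2 hn1
  have : (ε/2)^n + (ε/2)^n ≤ ε^n := by
    have h3 : (2:ℝ) * (ε/2)^n ≤ 2^n * (ε/2)^n := by
      have : (2:ℝ) ≤ 2^n := by
        calc (2:ℝ) = 2^1 := (pow_one 2).symm
        _ ≤ 2^n := by exact pow_le_pow_right₀ (by norm_num) hn1
      nlinarith [pow_nonneg (by positivity : (0:ℝ) ≤ ε/2) n]
    calc (ε/2)^n + (ε/2)^n = 2*(ε/2)^n := by ring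
      _ ≤ 2^n * (ε/2)^n := h3
      _ = ε^n := by rw [← mul_pow]; ring_nf
  linarith [h1, h2]

theorem DecSeq.const_mul {r : ℕ → ℝ} (hr : DecSeq r) (K : ℝ) (hK : 0 ≤ K) :
    DecSeq (fun n => K * r n) := by
  intro ε hε
  have hK2 : ∀ᶠ n : ℕ in atTop, K ≤ 2 ^ n := by
    obtain ⟨N, hN⟩ := pow_unbounded_of_one_lt K (by norm_num : (1:ℝ) < 2)
    filter_upwards [eventually_ge_atTop N] with n hn
    exact le_trans hN.le (pow_le_pow_right₀ (by norm_num) hn)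
  filter_upwards [hr (ε/2) (by positivity), hK2] with n h1 h2
  calc K * r n ≤ 2^n * (ε/2)^n := by
        rcases le_or_gt (r n) 0 with h | h
        · nlinarith [pow_nonneg (by positivity : (0:ℝ) ≤ ε/2) n,
            pow_nonneg (by norm_num : (0:ℝ) ≤ 2) n, mul_nonpos_of_nonneg_of_nonpos hK h]
        · nlinarith [pow_nonneg (by positivity : (0:ℝ) ≤ ε/2) n]
    _ = ε^n := by rw [← mul_pow]; ring_nf

theorem DecSeq.geom_mul {r : ℕ → ℝ} (hr : DecSeq r) (C : ℝ) (hC : 0 ≤ C) :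
    DecSeq (fun n => C^n * r n) := by
  intro ε hε
  filter_upwards [hr (ε/(C+1)) (by positivity)] with n h1
  have h2 : C^n * r n ≤ C^n * (ε/(C+1))^n := by
    apply mul_le_mul_of_nonneg_left h1 (pow_nonneg hC n)
  calc C^n * r n ≤ (C*(ε/(C+1)))^n := by rw [mul_pow]; exact h2
    _ ≤ ε^n := by
        apply pow_le_pow_left₀ (by positivity)
        rw [← mul_div_assoc, div_le_iff₀ (by positivity : (0:ℝ) < C+1)]
        nlinarith
  
theorem DecSeq.pred {r : ℕ → ℝ} (hr : DecSeq r) :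
    DecSeq (fun n => r (n - 1)) := by
  apply decSeq_of_small 1 one_pos
  intro ε hε hε1
  obtain ⟨N, hN⟩ := eventually_atTop.mp (hr (ε^2) (by positivity))
  filter_upwards [eventually_ge_atTop (N + 2)] with n hn
  calc r (n-1) ≤ (ε^2)^(n-1) := hN _ (by omega)
    _ = ε^(2*(n-1)) := by rw [← pow_mul]
    _ ≤ ε^n := pow_le_pow_of_le_one hε.le hε1 (by omega)

theorem DecSeq.pow_mul {r : ℕ → ℝ} (hr : DecSeq r) (k : ℕ) (hk : 1 ≤ k) :
    DecSeq (fun n => r (k * n)) := by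
  apply decSeq_of_small 1 one_pos
  intro ε hε hε1
  obtain ⟨N, hN⟩ := eventually_atTop.mp (hr ε hε)
  filter_upwards [eventually_ge_atTop N] with n hn
  calc r (k * n) ≤ ε ^ (k * n) := hN _ (le_trans hn (Nat.le_mul_of_pos_left n (by omega)))
    _ ≤ ε ^ n := pow_le_pow_of_le_one hε.le hε1 (Nat.le_mul_of_pos_left n (by omega))

theorem DecSeq.tendsto_zero {A : Type*} [SeminormedAddCommGroup A] {c : ℕ → A}
    (h : DecSeq (fun n => ‖c n‖)) : Tendsto c atTop (nhds 0) := by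
  refine squeeze_zero_norm' ?_
    (tendsto_pow_atTop_nhds_zero_of_lt_one (by norm_num : (0:ℝ) ≤ 1/2) (by norm_num))
  exact h (1/2) (by norm_num)

theorem DecSeq.summable {r : ℕ → ℝ} (hr : DecSeq r) (hnn : ∀ n, 0 ≤ r n) :
    Summable r := by
  obtain ⟨N, hN⟩ := eventually_atTop.mp (hr (1/2) (by norm_num))
  rw [← summable_nat_add_iff N]
  apply Summable.of_nonneg_of_le (fun n => hnn _) (fun n => hN (n+N) (by omega))
  have : Summable (fun n : ℕ => ((1:ℝ)/2)^N * (1/2)^n) :=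
    (summable_geometric_of_lt_one (by norm_num) (by norm_num)).mul_left _
  apply this.congr
  intro n; rw [← pow_add]; ring_nf

theorem tendsto_rpow_iff_decSeq {r : ℕ → ℝ} (hr : ∀ n, 0 ≤ r n) :
    Tendsto (fun n : ℕ => r n ^ (1 / (n : ℝ))) atTop (nhds 0) ↔ DecSeq r := by
  constructor
  · intro h ε hε
    have h1 : ∀ᶠ n : ℕ in atTop, r n ^ (1 / (n : ℝ)) < ε := h.eventually (eventually_lt_nhds hε)
    filter_upwards [h1, eventually_ge_atTop 1] with n hn hn1
    have hne : n ≠ 0 := by omega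
    have : (r n ^ (1 / (n : ℝ))) ^ n ≤ ε ^ n :=
      pow_le_pow_left₀ (Real.rpow_nonneg (hr n) _) hn.le n
    rwa [one_div, Real.rpow_inv_natCast_pow (hr n) hne] at this
  · intro h
    rw [Metric.tendsto_atTop]
    intro δ hδ
    obtain ⟨N, hN⟩ := eventually_atTop.mp (h (min (δ/2) 1) (by positivity))
    refine ⟨max N 1, fun n hn => ?_⟩
    have hn1 : 1 ≤ n := le_trans (le_max_right N 1) hn
    have hne : n ≠ 0 := by omega
    have hb : r n ≤ (min (δ/2) 1) ^ n := hN n (le_trans (le_max_left N 1) hn)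
    have hmin : (0:ℝ) ≤ min (δ/2) 1 := by positivity
    have : r n ^ (1 / (n : ℝ)) ≤ ((min (δ/2) 1) ^ n) ^ (1 / (n : ℝ)) :=
      Real.rpow_le_rpow (hr n) hb (by positivity)
    rw [one_div, Real.pow_rpow_inv_natCast hmin hne] at this
    rw [Real.dist_eq, sub_zero, abs_of_nonneg (Real.rpow_nonneg (hr n) _), one_div]
    calc r n ^ ((n:ℝ))⁻¹ ≤ min (δ/2) 1 := this
      _ ≤ δ/2 := min_le_left _ _
      _ < δ := by linarith

end DecLemmas

section RingLemmas

variable {A : Type*} [NormedRing A] [CompleteSpace A]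

/-- If a constant equals every term of a null sequence, it is zero. -/
theorem eq_zero_of_forall_eq {c : A} {d : ℕ → A} (h : ∀ m, c = d m)
    (hd : Tendsto d atTop (nhds 0)) : c = 0 := by
  have h1 : Tendsto (fun _ : ℕ => c) atTop (nhds c) := tendsto_const_nhds
  rw [funext h] at h1
  exact tendsto_nhds_unique h1 hd

theorem norm_pow_le_max {z : A} (j : ℕ) : ‖z^j‖ ≤ max 1 ‖(1:A)‖ * ‖z‖^j := by
  rcases Nat.eq_zero_or_pos j with rfl | hj
  · simpa using le_max_right 1 ‖(1:A)‖
  · calc ‖z^j‖ ≤ ‖z‖^j := norm_pow_le' z hj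
      _ ≤ max 1 ‖(1:A)‖ * ‖z‖^j := by
          nlinarith [pow_nonneg (norm_nonneg z) j, le_max_left (1:ℝ) ‖(1:A)‖]

/-- geometric series inverse of `1 + t` for quasinilpotent `t`. -/
theorem exists_inv_one_add {t : A} (ht : DecSeq (fun m => ‖t^m‖)) :
    ∃ u : A, (1 + t) * u = 1 ∧ u * (1 + t) = 1 := by
  have hs : DecSeq (fun m => ‖(-t)^m‖) := by
    refine ht.mono (Eventually.of_forall fun m => ?_)
    rcases Nat.even_or_odd m with h | h
    · rw [h.neg_pow]
    · rw [h.neg_pow, norm_neg]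
  have hsum : Summable (fun k : ℕ => (-t)^k) := by
    apply Summable.of_norm
    exact DecSeq.summable hs (fun n => norm_nonneg _)
  set S := ∑' k : ℕ, (-t)^k with hS
  have hpart : Tendsto (fun m => ∑ k ∈ Finset.range m, (-t)^k) atTop (nhds S) :=
    hsum.hasSum.tendsto_sum_nat
  have hpow0 : Tendsto (fun m : ℕ => (-t)^m) atTop (nhds 0) := DecSeq.tendsto_zero hs
  have key1 : Tendsto (fun m => (∑ k ∈ Finset.range m, (-t)^k) * (1 - (-t)))
      atTop (nhds (S * (1 - (-t)))) := hpart.mul_const _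
  have key1' : Tendsto (fun m => (∑ k ∈ Finset.range m, (-t)^k) * (1 - (-t)))
      atTop (nhds 1) := by
    have : (fun m => (∑ k ∈ Finset.range m, (-t)^k) * (1 - (-t)))
        = fun m => 1 - (-t)^m := by
      funext m
      have := geom_sum_mul (-t) m
      have h2 : (∑ k ∈ Finset.range m, (-t)^k) * (1 - -t)
          = -((∑ k ∈ Finset.range m, (-t)^k) * (-t - 1)) := by
        rw [show (-t - 1 : A) = -(1 - -t) from (neg_sub 1 (-t)).symm, mul_neg, neg_neg]
      rw [h2, this, neg_sub]
    rw [this]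
    have : Tendsto (fun m : ℕ => 1 - (-t)^m) atTop (nhds (1 - 0)) :=
      tendsto_const_nhds.sub hpow0
    simpa using this
  have e1 : S * (1 - (-t)) = 1 := tendsto_nhds_unique key1 key1'
  have key2 : Tendsto (fun m => (1 - (-t)) * (∑ k ∈ Finset.range m, (-t)^k))
      atTop (nhds ((1 - (-t)) * S)) := hpart.const_mul _
  have key2' : Tendsto (fun m => (1 - (-t)) * (∑ k ∈ Finset.range m, (-t)^k))
      atTop (nhds 1) := by
    have : (fun m => (1 - (-t)) * (∑ k ∈ Finset.range m, (-t)^k))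
        = fun m => 1 - (-t)^m := by
      funext m
      have := mul_geom_sum (-t) m
      have h2 : (1 - -t) * (∑ k ∈ Finset.range m, (-t)^k)
          = -((-t - 1) * ∑ k ∈ Finset.range m, (-t)^k) := by
        rw [show (-t - 1 : A) = -(1 - -t) from (neg_sub 1 (-t)).symm, neg_mul, neg_neg]
      rw [h2, this, neg_sub]
    rw [this]
    have : Tendsto (fun m : ℕ => 1 - (-t)^m) atTop (nhds (1 - 0)) :=
      tendsto_const_nhds.sub hpow0
    simpa using this
  have e2 : (1 - (-t)) * S = 1 := tendsto_nhds_unique key2 key2'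
  have hne : (1:A) + t = 1 - -t := by rw [sub_neg_eq_add]
  exact ⟨S, by rw [hne]; exact e2, by rw [hne]; exact e1⟩

end RingLemmas

section Core

variable {A : Type*} [NormedRing A] [CompleteSpace A]

theorem DecSeq.shift {r : ℕ → ℝ} (hr : DecSeq r) (j : ℕ) :
    DecSeq (fun n => r (n + j)) := by
  apply decSeq_of_small 1 one_pos
  intro ε hε hε1
  obtain ⟨N, hN⟩ := eventually_atTop.mp (hr ε hε)
  filter_upwards [eventually_ge_atTop N] with n hn
  calc r (n + j) ≤ ε ^ (n + j) := hN _ (by omega)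
    _ ≤ ε ^ n := pow_le_pow_of_le_one hε.le hε1 (by omega)

/-- `DecSeq` bound for `c * (r (m+j) * z^(m+k))`. -/
theorem dec_aux {r : ℕ → A} (hr : DecSeq (fun m => ‖r m‖)) (c z : A) (j k : ℕ) :
    DecSeq (fun m => ‖c * (r (m + j) * z ^ (m + k))‖) := by
  set C := max 1 ‖(1:A)‖ with hCdef
  have hC0 : (0:ℝ) ≤ C := le_trans zero_le_one (le_max_left _ _)
  have hKey : DecSeq (fun m => (‖c‖ * (C * ‖z‖^k)) * (‖z‖ ^ m * ‖r (m + j)‖)) :=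
    ((hr.shift j).geom_mul ‖z‖ (norm_nonneg z)).const_mul _
      (by positivity)
  refine hKey.mono (Eventually.of_forall fun m => ?_)
  have h1 : ‖z ^ (m+k)‖ ≤ C * ‖z‖^(m+k) := norm_pow_le_max _
  have h2 : ‖r (m+j) * z ^ (m+k)‖ ≤ ‖r (m+j)‖ * (C * ‖z‖^(m+k)) :=
    le_trans (norm_mul_le _ _) (mul_le_mul_of_nonneg_left h1 (norm_nonneg _))
  calc ‖c * (r (m + j) * z ^ (m + k))‖ ≤ ‖c‖ * ‖r (m + j) * z ^ (m + k)‖ := norm_mul_le _ _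
    _ ≤ ‖c‖ * (‖r (m+j)‖ * (C * ‖z‖^(m+k))) :=
        mul_le_mul_of_nonneg_left h2 (norm_nonneg c)
    _ = (‖c‖ * (C * ‖z‖^k)) * (‖z‖ ^ m * ‖r (m + j)‖) := by rw [pow_add]; ring

/-- `DecSeq` bound for `z^(m+k) * r (m+j) * c`. -/
theorem dec_aux' {r : ℕ → A} (hr : DecSeq (fun m => ‖r m‖)) (c z : A) (j k : ℕ) :
    DecSeq (fun m => ‖z ^ (m + k) * r (m + j) * c‖) := by
  set C := max 1 ‖(1:A)‖ with hCdef
  have hC0 : (0:ℝ) ≤ C := le_trans zero_le_one (le_max_left _ _)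
  have hKey : DecSeq (fun m => ((C * ‖z‖^k) * ‖c‖) * (‖z‖ ^ m * ‖r (m + j)‖)) :=
    ((hr.shift j).geom_mul ‖z‖ (norm_nonneg z)).const_mul _ (by positivity)
  refine hKey.mono (Eventually.of_forall fun m => ?_)
  have h1 : ‖z ^ (m+k)‖ ≤ C * ‖z‖^(m+k) := norm_pow_le_max _
  calc ‖z ^ (m+k) * r (m + j) * c‖ ≤ ‖z ^ (m+k) * r (m + j)‖ * ‖c‖ := norm_mul_le _ _
    _ ≤ (‖z ^ (m+k)‖ * ‖r (m+j)‖) * ‖c‖ :=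
        mul_le_mul_of_nonneg_right (norm_mul_le _ _) (norm_nonneg c)
    _ ≤ ((C * ‖z‖^(m+k)) * ‖r (m+j)‖) * ‖c‖ := by
        have := mul_le_mul_of_nonneg_right h1 (norm_nonneg (r (m+j)))
        exact mul_le_mul_of_nonneg_right this (norm_nonneg c)
    _ = ((C * ‖z‖^k) * ‖c‖) * (‖z‖ ^ m * ‖r (m + j)‖) := by rw [pow_add]; ring

variable {b z : A}

theorem bz_pow (h1 : b * z^2 = z) : ∀ k, b * z^(k+2) = z^(k+1) := by
  intro k
  calc b * z^(k+2) = b * (z^2 * z^k) := by rw [← pow_add, add_comm]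
    _ = (b * z^2) * z^k := (mul_assoc _ _ _).symm
    _ = z * z^k := by rw [h1]
    _ = z^(k+1) := by rw [← pow_succ']

theorem pow_bz (h1 : b * z^2 = z) : ∀ m, b^m * z^(m+1) = z := by
  intro m
  induction m with
  | zero => simp
  | succ m ih =>
    calc b^(m+1) * z^(m+2) = b^m * (b * z^(m+2)) := by rw [pow_succ, mul_assoc]
      _ = b^m * z^(m+1) := by rw [bz_pow h1]
      _ = z := ih

theorem pow_bz' (h1 : b * z^2 = z) : ∀ m, b^(m+1) * z^(m+1) = b * z := by
  intro m
  induction m with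
  | zero => simp
  | succ m ih =>
    calc b^(m+2) * z^(m+2) = b^(m+1) * (b * z^(m+2)) := by rw [pow_succ, mul_assoc]
      _ = b^(m+1) * z^(m+1) := by rw [bz_pow h1]
      _ = b * z := ih

theorem gdrazin_of_coreEP (h1 : b * z^2 = z)
    (hE : DecSeq (fun m => ‖b^m - z * b^(m+1)‖)) :
    ∃ y : A, b * y = y * b ∧ y * b * y = y ∧ DecSeq (fun m => ‖(b - b^2*y)^m‖) := by
  set E : ℕ → A := fun m => b^m - z * b^(m+1) with hEdef
  have hEz : ∀ m, z * b^(m+1) = b^m - E m := fun m => by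
    simp only [hEdef]; rw [sub_sub_cancel]
  -- the approximating sequence
  set g : ℕ → A := fun m => z^m * b^m with hgdef
  have hgdiff : ∀ m, g (m+1) = g m - z^m * E m := by
    intro m
    calc g (m+1) = z^m * (z * b^(m+1)) := by
          simp only [hgdef]; rw [pow_succ z, mul_assoc]
      _ = z^m * (b^m - E m) := by rw [hEz]
      _ = g m - z^m * E m := by simp only [hgdef]; rw [mul_sub]
  have hsum : Summable (fun m => dist (g m) (g (m+1))) := by
    have hdec : DecSeq (fun m => dist (g m) (g (m+1))) := by
      have h0 : DecSeq (fun m => ‖z ^ (m+0) * E (m+0) * (1:A)‖) := dec_aux' hE 1 z 0 0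
      refine DecSeq.mono (s := fun m => ‖z ^ (m + 0) * E (m + 0) * (1:A)‖) h0 ?_
      apply Eventually.of_forall
      intro m
      simp only [add_zero, mul_one]
      rw [dist_eq_norm, hgdiff m]
      simp
    exact hdec.summable (fun n => dist_nonneg)
  obtain ⟨e, he⟩ := cauchySeq_tendsto_of_complete (cauchySeq_of_summable_dist hsum)
  have hshift : ∀ k, Tendsto (fun m => g (m+k)) atTop (nhds e) :=
    fun k => he.comp (tendsto_add_atTop_nat k)
  -- b * e = e * b
  have hbe : b * e = e * b := by
    have hid : (fun m => b * g (m+2)) = (fun m => g (m+1) * b) := by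
      funext m
      calc b * g (m+2) = (b * z^(m+2)) * b^(m+2) := by
            simp only [hgdef]; rw [← mul_assoc]
        _ = z^(m+1) * b^(m+2) := by rw [bz_pow h1]
        _ = g (m+1) * b := by simp only [hgdef]; rw [pow_succ b (m+1), ← mul_assoc]
    have t1 : Tendsto (fun m => b * g (m+2)) atTop (nhds (b * e)) :=
      (hshift 2).const_mul b
    rw [hid] at t1
    exact tendsto_nhds_unique t1 ((hshift 1).mul_const b)
  have hbpow : ∀ m, b^m * e = e * b^m := fun m => ((show Commute b e from hbe).pow_left m).eq
  -- g j * e = e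
  have hgje : ∀ j, g j * e = e := by
    intro j
    have hid : (fun m => g j * g (m+j+1)) = (fun m => g (m+j+1)) := by
      funext m
      have hp : b^j * z^(m+j+1) = z^(m+1) := by
        induction j with
        | zero => simp
        | succ j ihj =>
          calc b^(j+1) * z^(m+(j+1)+1) = b^j * (b * z^((m+j)+2)) := by
                rw [pow_succ, mul_assoc, show m+(j+1)+1 = (m+j)+2 from by omega]
            _ = b^j * z^(m+j+1) := by rw [bz_pow h1]
            _ = z^(m+1) := ihj
      calc g j * g (m+j+1) = z^j * (b^j * z^(m+j+1)) * b^(m+j+1) := by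
            simp only [hgdef]
            rw [mul_assoc, ← mul_assoc (b^j), ← mul_assoc]
        _ = z^j * z^(m+1) * b^(m+j+1) := by rw [hp]
        _ = g (m+j+1) := by simp only [hgdef]; rw [← pow_add, show j+(m+1) = m+j+1 from by omega]
    have t1 : Tendsto (fun m => g j * g (m+j+1)) atTop (nhds (g j * e)) :=
      (hshift (j+1)).const_mul (g j)
    rw [hid] at t1
    exact tendsto_nhds_unique t1 (hshift (j+1))
  have hee : e * e = e := by
    have t1 : Tendsto (fun j => g j * e) atTop (nhds (e * e)) := he.mul_const e
    exact tendsto_nhds_unique t1 (by simpa [hgje] using (tendsto_const_nhds : Tendsto (fun _ : ℕ => e) atTop (nhds e)))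
  -- z * b * e = e
  have hzbe : z * b * e = e := by
    have hid : (fun m => z * b * g (m+2)) = (fun m => g (m+2)) := by
      funext m
      calc z * b * g (m+2) = z * (b * z^(m+2)) * b^(m+2) := by
            simp only [hgdef]; rw [← mul_assoc, mul_assoc z b]
        _ = z * z^(m+1) * b^(m+2) := by rw [bz_pow h1]
        _ = g (m+2) := by simp only [hgdef]; rw [← pow_succ' z (m+1)]
    have t1 : Tendsto (fun m => z * b * g (m+2)) atTop (nhds (z * b * e)) :=
      (hshift 2).const_mul (z*b)
    rw [hid] at t1
    exact tendsto_nhds_unique t1 (hshift 2)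
  -- b * z * e = e
  have hbze : b * z * e = e := by
    have hid : (fun m => b * z * g (m+1)) = (fun m => g (m+1)) := by
      funext m
      calc b * z * g (m+1) = (b * (z * z^(m+1))) * b^(m+1) := by
            simp only [hgdef]; rw [← mul_assoc, mul_assoc b z]
        _ = (b * z^(m+2)) * b^(m+1) := by rw [← pow_succ' z (m+1)]
        _ = z^(m+1) * b^(m+1) := by rw [bz_pow h1]
        _ = g (m+1) := by simp only [hgdef]
    have t1 : Tendsto (fun m => b * z * g (m+1)) atTop (nhds (b * z * e)) :=
      (hshift 1).const_mul (b*z)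
    rw [hid] at t1
    exact tendsto_nhds_unique t1 (hshift 1)
  -- e * z = z * e * (b * z)
  have hez : e * z = z * e * (b * z) := by
    have hid : (fun m => g (m+1) * z) = (fun m => z * g m * (b * z)) := by
      funext m
      calc g (m+1) * z = z^(m+1) * (b^m * (b * z)) := by
            simp only [hgdef]
            rw [pow_succ b m, mul_assoc (z^(m+1)) (b^m*b) z, mul_assoc (b^m) b z]
        _ = (z * z^m) * (b^m * (b*z)) := by rw [pow_succ' z m]
        _ = z * g m * (b * z) := by
            simp only [hgdef]
            rw [← mul_assoc (z*z^m) (b^m) (b*z), mul_assoc z (z^m) (b^m)]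
    have t1 : Tendsto (fun m => g (m+1) * z) atTop (nhds (e * z)) :=
      (hshift 1).mul_const z
    rw [hid] at t1
    have t2 : Tendsto (fun m => z * g m * (b*z)) atTop (nhds (z * e * (b*z))) :=
      (he.const_mul z).mul_const (b*z)
    exact tendsto_nhds_unique t1 t2
  have hl : b * (z*e) = e := by rw [← mul_assoc]; exact hbze
  have hr : (z*e) * b = e := by rw [mul_assoc, ← hbe, ← mul_assoc]; exact hzbe
  have h1me : (1-e) * b = b * (1-e) := by rw [sub_mul, mul_sub, one_mul, mul_one, hbe]
  have hidem : (1-e) * (1-e) = 1-e := by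
    calc (1-e) * (1-e) = 1 - e - e + e*e := by noncomm_ring
      _ = 1 - e := by rw [hee]; abel
  have hpow : ∀ m, (b*(1-e))^(m+1) = b^(m+1) * (1-e) := by
    intro m
    induction m with
    | zero => simp
    | succ m ih =>
      calc (b*(1-e))^(m+2) = (b^(m+1) * (1-e)) * (b*(1-e)) := by rw [pow_succ, ih]
        _ = b^(m+1) * (((1-e) * b) * (1-e)) := by rw [mul_assoc, ← mul_assoc (1-e)]
        _ = b^(m+1) * ((b * (1-e)) * (1-e)) := by rw [h1me]
        _ = b^(m+1) * (b * (1-e)) := by rw [mul_assoc b, hidem]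
        _ = b^(m+2) * (1-e) := by rw [← mul_assoc, ← pow_succ]
  -- partial sums identity
  have Ssum : ∀ m k, b^m - z^k * b^(k+m) = ∑ j ∈ Finset.range k, z^j * E (m+j) := by
    intro m k
    induction k with
    | zero => simp
    | succ k ih =>
      rw [Finset.sum_range_succ, ← ih]
      have hz5 : z^(k+1) * b^(k+1+m) = z^k * b^(k+m) - z^k * E (m+k) := by
        calc z^(k+1) * b^(k+1+m) = z^k * (z * b^((k+m)+1)) := by
              rw [pow_succ, show k+1+m = (k+m)+1 from by omega, mul_assoc]
          _ = z^k * (b^(k+m) - E (k+m)) := by rw [hEz]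
          _ = z^k * b^(k+m) - z^k * E (m+k) := by
              rw [mul_sub, show m+k = k+m from by omega]
      rw [hz5]; abel
  refine ⟨z * e, ?_, ?_, ?_⟩
  · rw [hl, hr]
  · calc (z*e)*b*(z*e) = e*(z*e) := by rw [hr]
      _ = (e*z)*e := by rw [mul_assoc]
      _ = (z*e*(b*z))*e := by rw [hez]
      _ = z*e*(b*z*e) := by rw [mul_assoc]
      _ = z*e*e := by rw [hbze]
      _ = z*e := by rw [mul_assoc, hee]
  · have hsub : b - b^2*(z*e) = b * (1-e) := by
      have : b^2*(z*e) = b * e := by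
        rw [pow_two, mul_assoc, hl]
      rw [this, mul_sub, mul_one]
    rw [hsub]
    -- the quasinilpotency estimate
    set C := max 1 ‖(1:A)‖ with hCdef
    have hC1 : (1:ℝ) ≤ C := le_max_left _ _
    intro δ hδ
    set ε := min (δ/2) (1/(2*(‖z‖+1))) with hεdef
    have hε : 0 < ε := by positivity
    have hεz : ‖z‖ * ε ≤ 1/2 := by
      have h1' : ε ≤ 1/(2*(‖z‖+1)) := min_le_right _ _
      have h2' : (0:ℝ) < 2*(‖z‖+1) := by positivity
      rw [le_div_iff₀ h2'] at h1'
      nlinarith [norm_nonneg z]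
    have hεδ : ε ≤ δ/2 := min_le_left _ _
    obtain ⟨N, hN⟩ := eventually_atTop.mp (hE ε hε)
    obtain ⟨N2, hN2'⟩ := pow_unbounded_of_one_lt (2*C) (by norm_num : (1:ℝ) < 2)
    filter_upwards [eventually_ge_atTop (N+1), eventually_ge_atTop (N2+1)] with m hm hm2
    have hm1 : 1 ≤ m := by omega
    -- uniform bound on the partial differences
    have hB : ∀ k, ‖b^m - z^k * b^(k+m)‖ ≤ 2*C*ε^m := by
      intro k
      rw [Ssum m k]
      have hterm : ∀ j ∈ Finset.range k, ‖z^j * E (m+j)‖ ≤ (C*ε^m)*(‖z‖*ε)^j := by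
        intro j _
        have hEb : ‖E (m+j)‖ ≤ ε^(m+j) := hN (m+j) (by omega)
        calc ‖z^j * E (m+j)‖ ≤ ‖z^j‖ * ‖E (m+j)‖ := norm_mul_le _ _
          _ ≤ (C * ‖z‖^j) * ε^(m+j) := by
              apply mul_le_mul (norm_pow_le_max j) hEb (norm_nonneg _)
              positivity
          _ = (C*ε^m)*(‖z‖*ε)^j := by rw [pow_add, mul_pow]; ring
      calc ‖∑ j ∈ Finset.range k, z^j * E (m+j)‖
          ≤ ∑ j ∈ Finset.range k, ‖z^j * E (m+j)‖ := norm_sum_le _ _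
        _ ≤ ∑ j ∈ Finset.range k, (C*ε^m)*(‖z‖*ε)^j := Finset.sum_le_sum hterm
        _ = (C*ε^m) * ∑ j ∈ Finset.range k, (‖z‖*ε)^j := by rw [Finset.mul_sum]
        _ ≤ (C*ε^m) * 2 := by
            apply mul_le_mul_of_nonneg_left _ (by positivity)
            calc ∑ j ∈ Finset.range k, (‖z‖*ε)^j ≤ ∑ j ∈ Finset.range k, (1/(2:ℝ))^j := by
                  apply Finset.sum_le_sum
                  intro j _
                  apply pow_le_pow_left₀ (by positivity) (by linarith)
              _ ≤ 2 := sum_geometric_two_le k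
        _ = 2*C*ε^m := by ring
    -- limit identification
    have hlim : Tendsto (fun k => b^m - z^k * b^(k+m)) atTop (nhds (b^m * (1-e))) := by
      have hid : (fun k => b^m - z^k * b^(k+m)) = (fun k => b^m - g k * b^m) := by
        funext k
        simp only [hgdef]
        rw [mul_assoc, ← pow_add]
      rw [hid]
      have t1 : Tendsto (fun k => b^m - g k * b^m) atTop (nhds (b^m - e * b^m)) :=
        tendsto_const_nhds.sub (he.mul_const _)
      have : b^m - e * b^m = b^m * (1-e) := by
        rw [← hbpow m, mul_sub, mul_one]
      rwa [this] at t1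
    have hnorm : ‖b^m * (1-e)‖ ≤ 2*C*ε^m :=
      le_of_tendsto hlim.norm (Eventually.of_forall hB)
    obtain ⟨m', rfl⟩ : ∃ m', m = m' + 1 := ⟨m - 1, by omega⟩
    rw [hpow m']
    calc ‖b^(m'+1) * (1-e)‖ ≤ 2*C*ε^(m'+1) := hnorm
      _ ≤ 2*C*(δ/2)^(m'+1) := by
          apply mul_le_mul_of_nonneg_left (pow_le_pow_left₀ hε.le hεδ _) (by positivity)
      _ ≤ δ^(m'+1) := by
          have h2C : 2*C ≤ 2^(m'+1) :=
            le_trans hN2'.le (pow_le_pow_right₀ (by norm_num) (by omega))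
          have hpos : (0:ℝ) ≤ (δ/2)^(m'+1) := by positivity
          calc 2*C*(δ/2)^(m'+1) ≤ 2^(m'+1) * (δ/2)^(m'+1) :=
                mul_le_mul_of_nonneg_right h2C hpos
            _ = δ^(m'+1) := by rw [← mul_pow]; ring_nf

end Core

section ForwardCore

variable {A : Type*} [NormedRing A] [StarRing A] [CompleteSpace A]

theorem forward_core {b z : A} (h1 : b * z^2 = z) (h2 : star (b*z) = b*z)
    (hE : DecSeq (fun m => ‖b^m - z * b^(m+1)‖)) (n : ℕ) (hn : 0 < n) :
    ∃ p : A, p^2 = p ∧ star p = p ∧ p*b = p*b*p ∧ DecSeq (fun m => ‖(p*b)^m‖) ∧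
      IsUnit (b^n + p) := by
  obtain ⟨n', rfl⟩ : ∃ n', n = n' + 1 := ⟨n - 1, by omega⟩
  set E : ℕ → A := fun m => b^m - z * b^(m+1) with hEdef
  have hEz : ∀ m, z * b^(m+1) = b^m - E m := fun m => by
    simp only [hEdef]; rw [sub_sub_cancel]
  have hdz : DecSeq (fun m => ‖E m * z^(m+1)‖) := by
    have h0 := dec_aux hE 1 z 0 1
    simpa using h0
  -- z * b * z = z
  have zbz : z * b * z = z := by
    have key : ∀ m, z - z*b*z = E m * z^(m+1) := by
      intro m
      have c1 : (z*b^(m+1))*z^(m+1) = z*b*z := by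
        rw [pow_succ' b m, ← mul_assoc z b (b^m), mul_assoc (z*b) (b^m) (z^(m+1)),
          pow_bz h1 m]
      calc z - z*b*z = z - (z*b^(m+1))*z^(m+1) := by rw [c1]
        _ = z - (b^m - E m)*z^(m+1) := by rw [hEz]
        _ = z - b^m*z^(m+1) + E m*z^(m+1) := by noncomm_ring
        _ = E m * z^(m+1) := by rw [pow_bz h1 m]; abel
    have h0 : z - z*b*z = 0 := eq_zero_of_forall_eq key hdz.tendsto_zero
    have := sub_eq_zero.mp h0
    exact this.symm
  -- z * b^2 * z = b * z
  have zb2z : z * b^2 * z = b * z := by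
    have key : ∀ m, z*b^2*z - b*z = -(E (m+1) * z^(m+1)) := by
      intro m
      have c1 : (z*b^(m+2))*z^(m+1) = z*b^2*z := by
        rw [show m+2 = 2+m from by omega, pow_add b 2 m, ← mul_assoc z (b^2) (b^m),
          mul_assoc (z*b^2) (b^m) (z^(m+1)), pow_bz h1 m]
      calc z*b^2*z - b*z = (z*b^(m+2))*z^(m+1) - b*z := by rw [c1]
        _ = (b^(m+1) - E (m+1))*z^(m+1) - b*z := by rw [hEz (m+1)]
        _ = b^(m+1)*z^(m+1) - E (m+1)*z^(m+1) - b*z := by noncomm_ring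
        _ = -(E (m+1)*z^(m+1)) := by rw [pow_bz' h1 m]; abel
    have hd : DecSeq (fun m => ‖-(E (m+1) * z^(m+1))‖) := by
      have h0 := dec_aux hE 1 z 1 1
      refine DecSeq.mono h0 (Eventually.of_forall fun m => ?_)
      simp [norm_neg, hEdef]
    have h0 : z*b^2*z - b*z = 0 := eq_zero_of_forall_eq key hd.tendsto_zero
    exact sub_eq_zero.mp h0
  set q : A := b * z with hqdef
  set p : A := 1 - b*z with hpdef
  have hpq : p = 1 - q := rfl
  have hqp : (1:A) - p = q := by rw [hpq, sub_sub_cancel]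
  have hq2 : q * q = q := by
    calc q * q = b*(z*b*z) := by
          rw [hqdef, mul_assoc b z (b*z), ← mul_assoc z b z]
      _ = q := by rw [zbz, hqdef]
  have hp2 : p * p = p := by
    calc p * p = 1 - q - q + q*q := by rw [hpq]; noncomm_ring
      _ = p := by rw [hq2, hpq]; abel
  have hps : star p = p := by
    rw [hpdef, star_sub, star_one, h2]
  -- p * (b^2 * z) = 0
  have hqb2z : q * (b^2*z) = b^2*z := by
    calc q * (b^2*z) = b*(z*b^2*z) := by
          rw [hqdef, mul_assoc b z (b^2*z), ← mul_assoc z (b^2) z]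
      _ = b*(b*z) := by rw [zb2z]
      _ = b^2*z := by rw [← mul_assoc, ← pow_two]
  have hpb2z : p * (b^2*z) = 0 := by
    calc p * (b^2*z) = b^2*z - q*(b^2*z) := by rw [hpq]; noncomm_ring
      _ = 0 := by rw [hqb2z]; abel
  have hpbp : p * b = p * b * p := by
    have hc : p*b*(b*z) = p*(b^2*z) := by
      rw [mul_assoc p b (b*z), ← mul_assoc b b z, ← pow_two]
    calc p * b = p*b - p*(b^2*z) := by rw [hpb2z]; abel
      _ = p*b - p*b*(b*z) := by rw [hc]
      _ = p*b*(1 - b*z) := by noncomm_ring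
      _ = p*b*p := by rw [← hpdef]
  -- (p*b)^(m+1) = p * b^(m+1)
  have hpbm : ∀ m, p * b^(m+1) = (p*b)^(m+1) := by
    intro m
    induction m with
    | zero => simp
    | succ m ih =>
      calc p * b^(m+2) = (p*b) * b^(m+1) := by rw [pow_succ' b (m+1), ← mul_assoc]
        _ = (p*b*p) * b^(m+1) := by rw [← hpbp]
        _ = (p*b) * (p * b^(m+1)) := by rw [mul_assoc (p*b) p (b^(m+1))]
        _ = (p*b) * (p*b)^(m+1) := by rw [ih]
        _ = (p*b)^(m+2) := by rw [← pow_succ']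
  have hpE : ∀ m, p * b^(m+1) = b * E m := by
    intro m
    calc p * b^(m+1) = b^(m+1) - b*(z*b^(m+1)) := by
          rw [hpdef]; noncomm_ring
      _ = b^(m+1) - b*(b^m - E m) := by rw [hEz]
      _ = b^(m+1) - b*b^m + b*E m := by noncomm_ring
      _ = b * E m := by rw [← pow_succ' b m]; abel
  have hdecpb : DecSeq (fun m => ‖(p*b)^m‖) := by
    refine DecSeq.mono ((hE.const_mul ‖b‖ (norm_nonneg b)).pred) ?_
    filter_upwards [eventually_ge_atTop 1] with m hm
    obtain ⟨m', rfl⟩ : ∃ m', m = m' + 1 := ⟨m - 1, by omega⟩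
    have : (p*b)^(m'+1) = b * E m' := by rw [← hpbm, hpE]
    rw [this, show m' + 1 - 1 = m' from by omega]
    exact norm_mul_le b (E m')
  refine ⟨p, by rw [pow_two]; exact hp2, hps, hpbp, hdecpb, ?_⟩
  -- invertibility of b^n + p
  set t : A := (p*b)^(n'+1) with htdef
  have hdect : DecSeq (fun k => ‖t^k‖) := by
    have h0 := hdecpb.pow_mul (n'+1) (by omega)
    refine DecSeq.mono h0 (Eventually.of_forall fun k => ?_)
    rw [htdef, ← pow_mul]
  obtain ⟨u, hu1, hu2⟩ := exists_inv_one_add hdect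
  have hpt : p * t = t := by
    rw [htdef, ← hpbm, ← mul_assoc, hp2]
  have htp : t * p = t := by
    rw [htdef, pow_succ, mul_assoc, ← hpbp, ← pow_succ]
  have hcomm : p * (1+t) = (1+t) * p := by
    rw [mul_add, add_mul, mul_one, one_mul, hpt, htp]
  have hpu : p * u = u * p := by
    calc p * u = (u*(1+t)) * (p * u) := by rw [hu2, one_mul]
      _ = u * ((1+t) * p) * u := by rw [mul_assoc u (1+t) (p*u), ← mul_assoc (1+t) p u,
            ← mul_assoc u ((1+t)*p) u]
      _ = u * (p * (1+t)) * u := by rw [hcomm]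
      _ = (u*p) * ((1+t)*u) := by rw [← mul_assoc u p (1+t), mul_assoc (u*p) (1+t) u]
      _ = u * p := by rw [hu1, mul_one]
  have hu_pt : u*t + u*p = p := by
    have : (1+t)*p = p + t := by rw [add_mul, one_mul, htp]
    calc u*t + u*p = u*(t+p) := by rw [mul_add, add_comm (u*t)]
      _ = u*((1+t)*p) := by rw [this, add_comm t p]
      _ = (u*(1+t))*p := by rw [mul_assoc]
      _ = p := by rw [hu2, one_mul]
  have h_tu_u : t*u + u = 1 := by
    have : (1+t)*u = 1 := hu1
    calc t*u + u = (1+t)*u := by rw [add_mul, one_mul, add_comm]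
      _ = 1 := hu1
  -- annihilation identities
  have hpz : p * z = 0 := by
    calc p * z = z - b*z^2 := by
          rw [hpdef]; noncomm_ring
      _ = 0 := by rw [h1]; abel
  have hzp : z * p = 0 := by
    calc z * p = z - z*b*z := by
          rw [hpdef]; noncomm_ring
      _ = 0 := by rw [zbz]; abel
  have hpzn : p * z^(n'+1) = 0 := by
    rw [pow_succ' z n', ← mul_assoc, hpz, zero_mul]
  have hznp : z^(n'+1) * p = 0 := by
    rw [pow_succ z n', mul_assoc, hzp, mul_zero]
  have hbnzn : b^(n'+1) * z^(n'+1) = q := pow_bz' h1 n'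
  have hpbn : p * b^(n'+1) = t := by rw [hpbm]
  -- z powers against (b*q) powers
  have hpbq : p * (b*q) = 0 := by
    rw [hqdef, ← mul_assoc b b z, ← pow_two]; exact hpb2z
  have hqp1 : q + p = 1 := by rw [hpq]; abel
  have hqbq : q * (b*q) = b*q := by
    have h' : (q + p)*(b*q) = b*q := by rw [hqp1, one_mul]
    rw [add_mul, hpbq, add_zero] at h'
    exact h'
  have hbnq : ∀ m, b^(m+1) * q = (b*q)^(m+1) := by
    intro m
    induction m with
    | zero => simp
    | succ m ih =>
      calc b^(m+2) * q = b^(m+1) * (b*q) := by rw [pow_succ, mul_assoc]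
        _ = b^(m+1) * (q*(b*q)) := by rw [hqbq]
        _ = (b^(m+1)*q) * (b*q) := by rw [← mul_assoc]
        _ = (b*q)^(m+1) * (b*q) := by rw [ih]
        _ = (b*q)^(m+2) := by rw [← pow_succ]
  have hzq : z * q = z := by rw [hqdef, ← mul_assoc]; exact zbz
  have hzbq : z * (b*q) = q := by
    rw [hqdef, ← mul_assoc z b (b*z), ← mul_assoc (z*b) b z, mul_assoc z b b, ← pow_two]
    exact zb2z
  have hznbq : ∀ m, z^(m+1) * (b*q)^(m+1) = q := by
    intro m
    induction m with
    | zero => simpa using hzbq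
    | succ m ih =>
      calc z^(m+2) * (b*q)^(m+2) = (z^(m+1)*(z*(b*q))) * (b*q)^(m+1) := by
            rw [pow_succ z (m+1), pow_succ' (b*q) (m+1), mul_assoc (z^(m+1)) z _,
              ← mul_assoc z (b*q) ((b*q)^(m+1)), ← mul_assoc (z^(m+1)) (z*(b*q)) ((b*q)^(m+1))]
        _ = (z^(m+1)*q) * (b*q)^(m+1) := by rw [hzbq]
        _ = z^(m+1) * (b*q)^(m+1) := by
            rw [pow_succ z m, mul_assoc (z^m) z q, hzq]
        _ = q := ih
  have hznbnq : z^(n'+1) * (b^(n'+1) * q) = q := by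
    rw [hbnq n', hznbq]
  -- the inverse
  set M : A := b^(n'+1) + p with hMdef
  set V : A := z^(n'+1) + u*p - z^(n'+1)*(b^(n'+1)*(u*p)) with hVdef
  have hMV : M * V = 1 := by
    have expand : M * V = b^(n'+1)*z^(n'+1) + b^(n'+1)*(u*p)
        - b^(n'+1)*(z^(n'+1)*(b^(n'+1)*(u*p)))
        + (p*z^(n'+1) + p*(u*p) - p*(z^(n'+1)*(b^(n'+1)*(u*p)))) := by
      rw [hMdef, hVdef]; noncomm_ring
    have T3 : p*(u*p) = u*p := by rw [← mul_assoc, hpu, mul_assoc, hp2]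
    have T4 : p*(z^(n'+1)*(b^(n'+1)*(u*p))) = 0 := by
      rw [← mul_assoc, hpzn, zero_mul]
    have T5 : b^(n'+1)*(z^(n'+1)*(b^(n'+1)*(u*p))) = q*(b^(n'+1)*(u*p)) := by
      rw [← mul_assoc, hbnzn]
    rw [expand, hbnzn, hpzn, T3, T4, T5]
    have hstep : b^(n'+1)*(u*p) - q*(b^(n'+1)*(u*p)) = p*(b^(n'+1)*(u*p)) := by
      have : p*(b^(n'+1)*(u*p)) = (1-q)*(b^(n'+1)*(u*p)) := by rw [hpq]
      rw [this]; noncomm_ring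
    have hfin : p*(b^(n'+1)*(u*p)) = (t*u)*p := by
      rw [← mul_assoc, hpbn, ← mul_assoc]
    calc q + b^(n'+1)*(u*p) - q*(b^(n'+1)*(u*p)) + (0 + u*p - 0)
        = q + (b^(n'+1)*(u*p) - q*(b^(n'+1)*(u*p))) + u*p := by abel
      _ = q + (t*u)*p + u*p := by rw [hstep, hfin]
      _ = q + (t*u + u)*p := by rw [add_mul]; abel
      _ = q + p := by rw [h_tu_u, one_mul]
      _ = 1 := by rw [hqdef, hpdef]; abel
  have hVM : V * M = 1 := by
    have expand : V * M = z^(n'+1)*b^(n'+1) + (u*p)*b^(n'+1)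
        - (z^(n'+1)*(b^(n'+1)*(u*p)))*b^(n'+1)
        + (z^(n'+1)*p + (u*p)*p - (z^(n'+1)*(b^(n'+1)*(u*p)))*p) := by
      rw [hMdef, hVdef]; noncomm_ring
    have S1 : (u*p)*b^(n'+1) = u*t := by rw [mul_assoc, hpbn]
    have S2 : (u*p)*p = u*p := by rw [mul_assoc, hp2]
    have S3 : (z^(n'+1)*(b^(n'+1)*(u*p)))*b^(n'+1) = z^(n'+1)*(b^(n'+1)*(u*t)) := by
      rw [mul_assoc (z^(n'+1)) (b^(n'+1)*(u*p)) (b^(n'+1)),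
        mul_assoc (b^(n'+1)) (u*p) (b^(n'+1)), S1]
    have S4 : (z^(n'+1)*(b^(n'+1)*(u*p)))*p = z^(n'+1)*(b^(n'+1)*(u*p)) := by
      rw [mul_assoc (z^(n'+1)) (b^(n'+1)*(u*p)) p,
        mul_assoc (b^(n'+1)) (u*p) p, S2]
    rw [expand, S1, S2, S3, S4, hznp]
    have hsum : z^(n'+1)*(b^(n'+1)*(u*t)) + z^(n'+1)*(b^(n'+1)*(u*p))
        = z^(n'+1)*(b^(n'+1)*p) := by
      rw [← mul_add, ← mul_add, hu_pt]
    calc z^(n'+1)*b^(n'+1) + u*t - z^(n'+1)*(b^(n'+1)*(u*t))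
          + (0 + u*p - z^(n'+1)*(b^(n'+1)*(u*p)))
        = z^(n'+1)*b^(n'+1) + (u*t + u*p)
          - (z^(n'+1)*(b^(n'+1)*(u*t)) + z^(n'+1)*(b^(n'+1)*(u*p))) := by abel
      _ = z^(n'+1)*b^(n'+1) + p - z^(n'+1)*(b^(n'+1)*p) := by rw [hu_pt, hsum]
      _ = z^(n'+1)*(b^(n'+1)*(1-p)) + p := by noncomm_ring
      _ = z^(n'+1)*(b^(n'+1)*q) + p := by rw [hqp]
      _ = q + p := by rw [hznbnq]
      _ = 1 := by rw [hqdef, hpdef]; abel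
  exact ⟨⟨M, V, hMV, hVM⟩, rfl⟩

end ForwardCore

section ReverseCore

variable {A : Type*} [NormedRing A] [StarRing A] [CompleteSpace A]

theorem reverse_core {b p : A} (n : ℕ) (hn : 0 < n) (hp2 : p*p = p) (hps : star p = p)
    (hpb : p*b = p*b*p) (hqn : DecSeq (fun m => ‖(p*b)^m‖)) (hU : IsUnit (b^n + p)) :
    ∃ z : A, b*z^2 = z ∧ star (b*z) = b*z ∧
      (∀ m, b^m - z*b^(m+1) = (1 - z*b)*(p*b)^m) := by
  obtain ⟨n', rfl⟩ : ∃ n', n = n' + 1 := ⟨n - 1, by omega⟩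
  set q : A := 1 - p with hqdef
  have hqp : (1:A) - q = p := by rw [hqdef, sub_sub_cancel]
  have hpq1 : q + p = 1 := by rw [hqdef]; abel
  have hq2 : q * q = q := by
    calc q * q = 1 - p - p + p*p := by rw [hqdef]; noncomm_ring
      _ = q := by rw [hp2, hqdef]; abel
  have hpq0 : p * q = 0 := by
    calc p * q = p - p*p := by rw [hqdef]; noncomm_ring
      _ = 0 := by rw [hp2]; abel
  have hqq0 : q * p = 0 := by
    calc q * p = p - p*p := by rw [hqdef]; noncomm_ring
      _ = 0 := by rw [hp2]; abel
  have hpbq : p * (b*q) = 0 := by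
    calc p * (b*q) = p*b - p*b*p := by rw [hqdef]; noncomm_ring
      _ = 0 := by rw [← hpb]; abel
  have hqbq : q * (b*q) = b*q := by
    have h' : (p + q)*(b*q) = b*q := by rw [add_comm p q, hpq1, one_mul]
    rw [add_mul, hpbq, zero_add] at h'
    exact h'
  have hbnq : ∀ m, b^(m+1) * q = (b*q)^(m+1) := by
    intro m
    induction m with
    | zero => simp
    | succ m ih =>
      calc b^(m+2) * q = b^(m+1) * (b*q) := by rw [pow_succ, mul_assoc]
        _ = b^(m+1) * (q*(b*q)) := by rw [hqbq]
        _ = (b^(m+1)*q) * (b*q) := by rw [← mul_assoc]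
        _ = (b*q)^(m+1) * (b*q) := by rw [ih]
        _ = (b*q)^(m+2) := by rw [← pow_succ]
  have hpbm : ∀ m, p * b^(m+1) = (p*b)^(m+1) := by
    intro m
    induction m with
    | zero => simp
    | succ m ih =>
      calc p * b^(m+2) = (p*b) * b^(m+1) := by rw [pow_succ' b (m+1), ← mul_assoc]
        _ = (p*b*p) * b^(m+1) := by rw [← hpb]
        _ = (p*b) * (p * b^(m+1)) := by rw [mul_assoc (p*b) p (b^(m+1))]
        _ = (p*b) * (p*b)^(m+1) := by rw [ih]
        _ = (p*b)^(m+2) := by rw [← pow_succ']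
  set t : A := (p*b)^(n'+1) with htdef
  have hdect : DecSeq (fun k => ‖t^k‖) := by
    have h0 := hqn.pow_mul (n'+1) (by omega)
    refine DecSeq.mono h0 (Eventually.of_forall fun k => ?_)
    rw [htdef, ← pow_mul]
  obtain ⟨u, hu1, hu2⟩ := exists_inv_one_add hdect
  have hpt : p * t = t := by
    rw [htdef, ← hpbm, ← mul_assoc, hp2]
  have htp : t * p = t := by
    rw [htdef, pow_succ, mul_assoc, ← hpb, ← pow_succ]
  have hu_pt : u*t + u*p = p := by
    have h3 : (1+t)*p = p + t := by rw [add_mul, one_mul, htp]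
    calc u*t + u*p = u*(t+p) := by rw [mul_add, add_comm (u*t)]
      _ = u*((1+t)*p) := by rw [h3, add_comm t p]
      _ = (u*(1+t))*p := by rw [mul_assoc]
      _ = p := by rw [hu2, one_mul]
  -- the inverse of b^(n'+1) + p
  obtain ⟨Un, hUn⟩ := hU
  set V : A := ↑Un⁻¹ with hVdef
  have hMV : (b^(n'+1) + p) * V = 1 := by rw [hVdef, ← hUn]; exact Un.mul_inv
  have hVM : V * (b^(n'+1) + p) = 1 := by rw [hVdef, ← hUn]; exact Un.inv_mul
  have hpM : p * (b^(n'+1) + p) = t + p := by rw [mul_add, hpbm, hp2, htdef]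
  have e1 : (t+p)*V = p := by
    calc (t+p)*V = (p * (b^(n'+1) + p))*V := by rw [hpM]
      _ = p * ((b^(n'+1) + p)*V) := by rw [mul_assoc]
      _ = p := by rw [hMV, mul_one]
  have hpV : p * V = u * p := by
    have h4 : u*(t+p) = p := by rw [mul_add]; exact hu_pt
    calc p * V = (u*(t+p)) * V := by rw [h4]
      _ = u*((t+p)*V) := by rw [mul_assoc]
      _ = u*p := by rw [e1]
  -- corner inverse
  have hα2 : b^(n'+1)*(V*q) = q := by
    have h5 : (b^(n'+1) + p)*V*q = q := by rw [hMV, one_mul]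
    rw [add_mul, add_mul] at h5
    rw [hpV, mul_assoc u p q, hpq0, mul_zero, add_zero] at h5
    rw [mul_assoc (b^(n'+1)) V q] at h5
    exact h5
  have hα1 : V*((b*q)^(n'+1)) = q := by
    have h5 : V*((b^(n'+1) + p)*q) = q := by
      rw [← mul_assoc, hVM, one_mul]
    rw [add_mul, hpq0, add_zero, hbnq n'] at h5
    exact h5
  set c : A := b*q with hcdef
  set z : A := (V*q) * c^n' with hzdef
  have hqVq : q*(V*q) = V*q := by
    have : p*(V*q) = 0 := by rw [← mul_assoc, hpV, mul_assoc, hpq0, mul_zero]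
    calc q*(V*q) = V*q - p*(V*q) := by rw [hqdef]; noncomm_ring
      _ = V*q := by rw [this]; abel
  have hVqq : (V*q)*q = V*q := by rw [mul_assoc, hq2]
  have hqc : q*c = c := hqbq
  have hcq : c*q = c := by rw [hcdef, mul_assoc, hq2]
  have hqck : ∀ k, c^k * q = q * c^k := by
    intro k
    induction k with
    | zero => simp
    | succ k ih =>
      calc c^(k+1)*q = c^k*(c*q) := by rw [pow_succ, mul_assoc]
        _ = c^k*(q*c) := by rw [hcq, hqc]
        _ = (c^k*q)*c := by rw [← mul_assoc]
        _ = q*(c^k*c) := by rw [ih, mul_assoc]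
        _ = q*c^(k+1) := by rw [← pow_succ]
  have hqcn : ∀ k, q * c^(k+1) = c^(k+1) := by
    intro k
    rw [pow_succ' c k, ← mul_assoc, hqc]
  have hαα' : c^(n'+1) * (V*q) = q := by
    calc c^(n'+1) * (V*q) = (b^(n'+1)*q) * (V*q) := by rw [← hbnq n']
      _ = b^(n'+1)*(q*(V*q)) := by rw [mul_assoc]
      _ = b^(n'+1)*(V*q) := by rw [hqVq]
      _ = q := hα2
  have hα'α : (V*q) * c^(n'+1) = q := by
    calc (V*q) * c^(n'+1) = V*(q*c^(n'+1)) := by rw [mul_assoc]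
      _ = V*c^(n'+1) := by rw [hqcn n']
      _ = q := hα1
  have hcα' : c*(V*q) = (V*q)*c := by
    have hstart : q*(c*(V*q)) = c*(V*q) := by rw [← mul_assoc q c (V*q), hqc]
    calc c*(V*q) = q*(c*(V*q)) := hstart.symm
      _ = ((V*q)*c^(n'+1))*(c*(V*q)) := by rw [hα'α]
      _ = (V*q)*(c^(n'+1)*c)*(V*q) := by
          rw [mul_assoc (V*q) (c^(n'+1)) (c*(V*q)), ← mul_assoc (c^(n'+1)) c (V*q),
            ← mul_assoc (V*q) (c^(n'+1)*c) (V*q)]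
      _ = (V*q)*(c*c^(n'+1))*(V*q) := by rw [← pow_succ, ← pow_succ']
      _ = ((V*q)*c)*(c^(n'+1)*(V*q)) := by
          rw [mul_assoc (V*q) (c*c^(n'+1)) (V*q), mul_assoc c (c^(n'+1)) (V*q),
            ← mul_assoc (V*q) c (c^(n'+1)*(V*q))]
      _ = ((V*q)*c)*q := by rw [hαα']
      _ = (V*q)*(c*q) := by rw [mul_assoc]
      _ = (V*q)*c := by rw [hcq]
  have hzq : z*q = z := by
    rw [hzdef, mul_assoc, hqck n', ← mul_assoc, hVqq]
  have hqz : q*z = z := by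
    rw [hzdef, ← mul_assoc, hqVq]
  have hzc : z*c = q := by
    rw [hzdef, mul_assoc, ← pow_succ, hα'α]
  have hcz : c*z = q := by
    rw [hzdef, ← mul_assoc, hcα', mul_assoc, ← pow_succ']
    exact hα'α
  have hbz : b*z = q := by
    calc b*z = b*(q*z) := by rw [hqz]
      _ = c*z := by rw [hcdef, ← mul_assoc]
      _ = q := hcz
  refine ⟨z, ?_, ?_, ?_⟩
  · rw [pow_two, ← mul_assoc, hbz, hqz]
  · rw [hbz, hqdef, star_sub, star_one, hps]
  · -- the error identity
    have hzb : (1:A) - z*b = (1 - z*b)*p := by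
      have hb1 : b = b*q + b*p := by rw [← mul_add, hpq1, mul_one]
      have h3 : z*b = q + z*(b*p) := by
        calc z*b = z*(b*q) + z*(b*p) := by rw [← mul_add, ← hb1]
          _ = q + z*(b*p) := by rw [← hcdef, hzc]
      calc (1:A) - z*b = 1 - q - z*(b*p) := by rw [h3]; abel
        _ = p - z*(b*p) := by rw [hqp]
        _ = (1 - z*b)*p := by
            rw [sub_mul, one_mul, mul_assoc z b p]
    intro m
    match m with
    | 0 => simp
    | Nat.succ m' =>
      calc b^(m'+1) - z*b^(m'+2) = (1 - z*b)*b^(m'+1) := by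
            rw [sub_mul, one_mul, mul_assoc z b (b^(m'+1)), ← pow_succ' b (m'+1)]
        _ = ((1 - z*b)*p)*b^(m'+1) := by rw [← hzb]
        _ = (1 - z*b)*(p*b^(m'+1)) := by rw [mul_assoc]
        _ = (1 - z*b)*(p*b)^(m'+1) := by rw [hpbm]

end ReverseCore

section Wrap

variable {A : Type*} [NormedRing A] [StarRing A] [CompleteSpace A]

theorem mul_pow_shift (x y : A) : ∀ m, (x*y)^(m+1) = x*((y*x)^m*y) := by
  intro m
  induction m with
  | zero => simp
  | succ m ih =>
    calc (x*y)^(m+2) = ((x*y)^(m+1))*(x*y) := pow_succ _ _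
      _ = (x*((y*x)^m*y))*(x*y) := by rw [ih]
      _ = x*(((y*x)^m*(y*x))*y) := by noncomm_ring
      _ = x*((y*x)^(m+1)*y) := by rw [← pow_succ]

theorem wgdrazin_parts {w a y : A} (hy1 : (w*a)*y = y*(w*a))
    (hy2 : y*(w*a)*y = y) (hy3 : DecSeq (fun m => ‖((w*a) - (w*a)^2*y)^m‖)) :
    a*w*(a*(y*y)) = (a*(y*y))*w*a ∧ (a*(y*y))*w*a*w*(a*(y*y)) = a*(y*y) ∧
      DecSeq (fun m => ‖((a - a*w*(a*(y*y))*w*a)*w)^m‖) := by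
  have byy : (w*a)*(y*y) = y := by
    calc (w*a)*(y*y) = ((w*a)*y)*y := by rw [← mul_assoc]
      _ = (y*(w*a))*y := by rw [hy1]
      _ = y := hy2
  have yyb : (y*y)*(w*a) = y := by
    calc (y*y)*(w*a) = y*((w*a)*y) := by rw [mul_assoc y y (w*a), ← hy1]
      _ = (y*(w*a))*y := by rw [← mul_assoc]
      _ = y := hy2
  have hL : a*w*(a*(y*y)) = a*y := by
    rw [mul_assoc a w (a*(y*y)), ← mul_assoc w a (y*y), byy]
  have hR : (a*(y*y))*w*a = a*y := by
    rw [mul_assoc (a*(y*y)) w a, mul_assoc a (y*y) (w*a), yyb]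
  refine ⟨hL.trans hR.symm, ?_, ?_⟩
  · calc (a*(y*y))*w*a*w*(a*(y*y)) = (a*y)*w*(a*(y*y)) := by rw [hR]
      _ = a*(y*((w*a)*(y*y))) := by
          rw [mul_assoc (a*y) w (a*(y*y)), mul_assoc a y (w*(a*(y*y))),
            ← mul_assoc w a (y*y)]
      _ = a*(y*y) := by rw [byy]
  · have hcid : a - a*w*(a*(y*y))*w*a = a - a*(y*(w*a)) := by
      rw [hL, mul_assoc (a*y) w a, mul_assoc a y (w*a)]
    rw [hcid]
    have hwc : w*(a - a*(y*(w*a))) = (w*a) - (w*a)^2*y := by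
      have h2 : (w*a)^2*y = (y*(w*a))*(w*a) := by
        rw [pow_two, mul_assoc (w*a) (w*a) y, hy1, ← mul_assoc (w*a) y (w*a), hy1]
      rw [mul_sub, h2, ← mul_assoc w a (y*(w*a)), ← mul_assoc (w*a) y (w*a), hy1]
    refine DecSeq.mono (((hy3.const_mul (‖a - a*(y*(w*a))‖ * ‖w‖)
      (by positivity)).pred)) ?_
    filter_upwards [eventually_ge_atTop 1] with m hm
    obtain ⟨m', rfl⟩ : ∃ m', m = m'+1 := ⟨m-1, by omega⟩
    have hps : ((a - a*(y*(w*a)))*w)^(m'+1)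
        = (a - a*(y*(w*a)))*((w*(a - a*(y*(w*a))))^m'*w) := mul_pow_shift _ _ m'
    rw [hps, hwc, show m'+1-1 = m' from rfl]
    calc ‖(a - a*(y*(w*a)))*(((w*a) - (w*a)^2*y)^m'*w)‖
        ≤ ‖a - a*(y*(w*a))‖ * ‖((w*a) - (w*a)^2*y)^m'*w‖ := norm_mul_le _ _
      _ ≤ ‖a - a*(y*(w*a))‖ * (‖((w*a) - (w*a)^2*y)^m'‖*‖w‖) :=
          mul_le_mul_of_nonneg_left (norm_mul_le _ _) (norm_nonneg _)
      _ = ‖a - a*(y*(w*a))‖ * ‖w‖ * ‖((w*a) - (w*a)^2*y)^m'‖ := by ring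

end Wrap

section Main

variable {A : Type*} [NormedRing A] [NormedAlgebra ℂ A] [StarRing A] [StarModule ℂ A]
  [CompleteSpace A]

/-- Theorem 3.6. -/
theorem isWCoreEPInv_exists_iff_polar (w a : A) (n : ℕ) (hn : 0 < n) :
    (∃ x, IsWCoreEPInv w a x) ↔
      (∃ x, IsWGDrazinInv w a x) ∧
      ∃ p : A, p ^ 2 = p ∧ star p = p ∧ p * w * a = p * w * a * p ∧
        IsQuasinilpotent (p * w * a) ∧ IsUnit ((w * a) ^ n + p) := by
  constructor
  · rintro ⟨x, hx1, hx2, hx3⟩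
    have hr : DecSeq (fun m => ‖(a*w)^m - x*w*(a*w)^(m+1)‖) :=
      (tendsto_rpow_iff_decSeq (fun m => norm_nonneg _)).mp hx3
    have hz1 : (w*a)*(w*x)^2 = w*x := by
      have h0 : (w*a)*(w*x)^2 = w*(a*(w*x)^2) := by noncomm_ring
      rw [h0, hx1]
    have hz2 : star ((w*a)*(w*x)) = (w*a)*(w*x) := by
      rw [← mul_assoc (w*a) w x]
      exact hx2
    have hz3 : DecSeq (fun m => ‖(w*a)^m - (w*x)*(w*a)^(m+1)‖) := by
      refine DecSeq.mono ((hr.const_mul (‖w‖*‖a‖) (by positivity)).pred) ?_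
      filter_upwards [eventually_ge_atTop 1] with m hm
      obtain ⟨m', rfl⟩ : ∃ m', m = m'+1 := ⟨m-1, by omega⟩
      have hid : (w*a)^(m'+1) - (w*x)*(w*a)^(m'+2)
          = w*(((a*w)^m' - x*w*(a*w)^(m'+1))*a) := by
        rw [mul_pow_shift w a m', mul_pow_shift w a (m'+1), mul_pow_shift a w m']
        noncomm_ring
      rw [hid, show m'+1-1 = m' from rfl]
      calc ‖w*(((a*w)^m' - x*w*(a*w)^(m'+1))*a)‖
          ≤ ‖w‖*‖((a*w)^m' - x*w*(a*w)^(m'+1))*a‖ := norm_mul_le _ _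
        _ ≤ ‖w‖*(‖(a*w)^m' - x*w*(a*w)^(m'+1)‖*‖a‖) :=
            mul_le_mul_of_nonneg_left (norm_mul_le _ _) (norm_nonneg _)
        _ = ‖w‖*‖a‖*‖(a*w)^m' - x*w*(a*w)^(m'+1)‖ := by ring
    constructor
    · obtain ⟨y, hy1, hy2, hy3⟩ := gdrazin_of_coreEP hz1 hz3
      obtain ⟨hw1, hw2, hw3⟩ := wgdrazin_parts hy1 hy2 hy3
      exact ⟨a*(y*y), hw1, hw2,
        (tendsto_rpow_iff_decSeq (fun m => norm_nonneg _)).mpr hw3⟩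
    · obtain ⟨p, hp2, hps, hpb, hpq, hU⟩ := forward_core hz1 hz2 hz3 n hn
      refine ⟨p, hp2, hps, ?_, ?_, hU⟩
      · rw [mul_assoc p w a]
        exact hpb
      · have h4 : DecSeq (fun m => ‖(p*w*a)^m‖) := by
          simpa only [mul_assoc] using hpq
        exact (tendsto_rpow_iff_decSeq (fun m => norm_nonneg _)).mpr h4
  · rintro ⟨hgd, p, hp2, hps, hpb, hpqn, hU⟩
    have hpb' : p*(w*a) = p*(w*a)*p := by
      have h0 := hpb
      rw [mul_assoc p w a] at h0
      exact h0
    have hdec : DecSeq (fun m => ‖(p*(w*a))^m‖) := by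
      have h0 : DecSeq (fun m => ‖(p*w*a)^m‖) :=
        (tendsto_rpow_iff_decSeq (fun m => norm_nonneg _)).mp hpqn
      simpa only [mul_assoc] using h0
    obtain ⟨z, hz1, hz2, hEid⟩ :=
      reverse_core n hn (by rw [← pow_two]; exact hp2) hps hpb' hdec hU
    have hwx : w*(a*(z*z)) = z := by
      rw [← mul_assoc w a (z*z), show z*z = z^2 from (pow_two z).symm]
      exact hz1
    refine ⟨a*(z*z), ?_, ?_, ?_⟩
    · rw [hwx, pow_two]
    · rw [mul_assoc (w*a) w (a*(z*z)), show w*(a*(z*z)) = z from hwx]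
      exact hz2
    · apply (tendsto_rpow_iff_decSeq (fun m => norm_nonneg _)).mpr
      have hF : DecSeq (fun m => ‖(1 - z*(w*a))*(p*(w*a))^m‖) :=
        DecSeq.mono (hdec.const_mul ‖1 - z*(w*a)‖ (norm_nonneg _))
          (Eventually.of_forall fun m => norm_mul_le _ _)
      refine DecSeq.mono (((hF.const_mul (‖a‖*‖w‖) (by positivity)).pred).add
        ((hF.const_mul (‖a‖*‖w‖*‖z‖) (by positivity)))) ?_
      filter_upwards [eventually_ge_atTop 1] with m hm
      obtain ⟨m', rfl⟩ : ∃ m', m = m'+1 := ⟨m-1, by omega⟩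
      have hid : (a*w)^(m'+1) - (a*(z*z))*w*(a*w)^(m'+2)
          = a*(((w*a)^m' - (z*z)*(w*a)^(m'+2))*w) := by
        rw [mul_pow_shift a w m', mul_pow_shift a w (m'+1), pow_succ' (w*a) (m'+1)]
        noncomm_ring
      have hsplit : (w*a)^m' - (z*z)*(w*a)^(m'+2)
          = ((w*a)^m' - z*(w*a)^(m'+1)) + z*((w*a)^(m'+1) - z*(w*a)^(m'+2)) := by
        noncomm_ring
      rw [hid, hsplit, hEid m', hEid (m'+1), show m'+1-1 = m' from rfl]
      calc ‖a*((((1 - z*(w*a))*(p*(w*a))^m') + z*((1 - z*(w*a))*(p*(w*a))^(m'+1)))*w)‖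
          ≤ ‖a‖*(‖((1 - z*(w*a))*(p*(w*a))^m') + z*((1 - z*(w*a))*(p*(w*a))^(m'+1))‖*‖w‖) :=
            le_trans (norm_mul_le _ _)
              (mul_le_mul_of_nonneg_left (norm_mul_le _ _) (norm_nonneg _))
        _ ≤ ‖a‖*((‖(1 - z*(w*a))*(p*(w*a))^m'‖
              + ‖z‖*‖(1 - z*(w*a))*(p*(w*a))^(m'+1)‖)*‖w‖) := by
            have h5 : ‖((1 - z*(w*a))*(p*(w*a))^m') + z*((1 - z*(w*a))*(p*(w*a))^(m'+1))‖
                ≤ ‖(1 - z*(w*a))*(p*(w*a))^m'‖ + ‖z‖*‖(1 - z*(w*a))*(p*(w*a))^(m'+1)‖ :=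
              le_trans (norm_add_le _ _)
                (by
                  have := norm_mul_le z ((1 - z*(w*a))*(p*(w*a))^(m'+1))
                  linarith)
            exact mul_le_mul_of_nonneg_left
              (mul_le_mul_of_nonneg_right h5 (norm_nonneg w)) (norm_nonneg a)
        _ = ‖a‖*‖w‖*‖(1 - z*(w*a))*(p*(w*a))^m'‖
              + ‖a‖*‖w‖*‖z‖*‖(1 - z*(w*a))*(p*(w*a))^(m'+1)‖ := by ring

end Main
end
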